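/- arXiv:1503.06543 — 8 statements merged into one kernel-verified Lean document; each statement's English description precedes it below -/
import Mathlib

section
/- Let T : X → X be a map on a Banach space X, x_0 ∈ X, and suppose ‖T(x) - T(y)‖ ≤ φ'(v)·‖x - y‖ whenever x, y lie in the closed ball B̄(x_0, v) for v ≤ r, where φ : [0,r] → ℝ is a continuously differentiable, non-decreasing, convex-type majorant with ‖T(x_0) - x_0‖ ≤ φ(0), and the equation v = φ(v) has minimal solution v_* ∈ [0,r]. Then the iterates x_{k+1} = T(x_k) remain in B̄(x_0, v_*), satisfy ‖x_{k+1} - x_k‖ ≤ v_{k+1} - v_k for the majorizing sequence v_0 = 0, v_{k+1} = φ(v_k), and converge to a fixed point x_* of T with ‖x_* - x_k‖ ≤ v_* - v_k. -/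
open Set Filter Metric Topology

lemma key_step {X : Type*} [NormedAddCommGroup X] [NormedSpace ℝ X]
    (T : X → X) (x0 : X) (r : ℝ)
    (φ φ' : ℝ → ℝ)
    (hderiv : ∀ v ∈ Icc (0:ℝ) r, HasDerivAt φ (φ' v) v)
    (hφ'cont : ContinuousOn φ' (Icc 0 r))
    (hφ'nonneg : ∀ v ∈ Icc (0:ℝ) r, 0 ≤ φ' v)
    (hφ'mono : MonotoneOn φ' (Icc 0 r))
    (hlip : ∀ v ∈ Icc (0:ℝ) r, ∀ x ∈ closedBall x0 v, ∀ y ∈ closedBall x0 v,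
      ‖T x - T y‖ ≤ φ' v * ‖x - y‖)
    {a b : ℝ} (ha : 0 ≤ a) (hab : a ≤ b) (hb : b ≤ r)
    {y z : X} (hy : y ∈ closedBall x0 a) (hz : ‖z - y‖ ≤ b - a) :
    ‖T z - T y‖ ≤ φ b - φ a := by
  set d := z - y with hd
  set δ := b - a with hδ
  have hδ0 : 0 ≤ δ := sub_nonneg.2 hab
  set R : ℝ → ℝ := fun s => a + s * δ with hR
  have hRmem : ∀ s ∈ Icc (0:ℝ) 1, R s ∈ Icc 0 r := by
    intro s hs
    constructor
    · have := mul_nonneg hs.1 hδ0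
      simp only [hR]; linarith
    · have : s * δ ≤ 1 * δ := mul_le_mul_of_nonneg_right hs.2 hδ0
      simp only [hR]; simp only [one_mul] at this; linarith
  have hmem : ∀ s ∈ Icc (0:ℝ) 1, y + s • d ∈ closedBall x0 (R s) := by
    intro s hs
    rw [mem_closedBall, dist_eq_norm]
    have h1 : ‖y + s • d - x0‖ ≤ ‖y - x0‖ + ‖s • d‖ := by
      have : y + s • d - x0 = (y - x0) + s • d := by abel
      rw [this]; exact norm_add_le _ _
    have h2 : ‖s • d‖ = s * ‖d‖ := by
      rw [norm_smul, Real.norm_of_nonneg hs.1]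
    have h3 : s * ‖d‖ ≤ s * δ := mul_le_mul_of_nonneg_left hz hs.1
    have h4 : ‖y - x0‖ ≤ a := by rwa [mem_closedBall, dist_eq_norm] at hy
    calc ‖y + s • d - x0‖ ≤ ‖y - x0‖ + ‖s • d‖ := h1
      _ ≤ a + s * δ := by rw [h2]; linarith
  set g : ℝ → X := fun s => T (y + s • d) with hg
  have hpair : ∀ s t : ℝ, 0 ≤ s → s ≤ t → t ≤ 1 →
      ‖g t - g s‖ ≤ φ' (R t) * ((t - s) * ‖d‖) := by
    intro s t hs hst ht1
    have hsI : s ∈ Icc (0:ℝ) 1 := ⟨hs, hst.trans ht1⟩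
    have htI : t ∈ Icc (0:ℝ) 1 := ⟨hs.trans hst, ht1⟩
    have hRt : R t ∈ Icc 0 r := hRmem t htI
    have hms : y + s • d ∈ closedBall x0 (R t) := by
      have := hmem s hsI
      refine closedBall_subset_closedBall ?_ this
      simp only [hR]
      have : s * δ ≤ t * δ := mul_le_mul_of_nonneg_right hst hδ0
      linarith
    have hmt : y + t • d ∈ closedBall x0 (R t) := hmem t htI
    have := hlip (R t) hRt (y + t • d) hmt (y + s • d) hms
    have heq : (y + t • d) - (y + s • d) = (t - s) • d := by
      rw [sub_smul]; abel
    rw [heq, norm_smul, Real.norm_of_nonneg (sub_nonneg.2 hst)] at this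
    exact this
  set f : ℝ → ℝ := fun s => ‖g s - g 0‖ with hf
  have hfcont : ContinuousOn f (Icc 0 1) := by
    have hC : 0 ≤ φ' b * ‖d‖ := by
      have : b ∈ Icc (0:ℝ) r := ⟨ha.trans hab, hb⟩
      exact mul_nonneg (hφ'nonneg b this) (norm_nonneg _)
    have haux : ∀ s ∈ Icc (0:ℝ) 1, ∀ t ∈ Icc (0:ℝ) 1, t ≤ s →
        |f s - f t| ≤ φ' b * ‖d‖ * |s - t| := by
      intro s hs t ht hst
      have key : ‖g s - g t‖ ≤ φ' b * ‖d‖ * |s - t| := by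
        have h1 := hpair t s ht.1 hst hs.2
        have h2 : φ' (R s) ≤ φ' b := by
          apply hφ'mono (hRmem s hs) ⟨ha.trans hab, hb⟩
          simp only [hR]
          have : s * δ ≤ 1 * δ := mul_le_mul_of_nonneg_right hs.2 hδ0
          simp only [one_mul] at this; linarith
        have h3 : φ' (R s) * ((s - t) * ‖d‖) ≤ φ' b * ((s - t) * ‖d‖) :=
          mul_le_mul_of_nonneg_right h2 (mul_nonneg (sub_nonneg.2 hst) (norm_nonneg _))
        rw [abs_of_nonneg (sub_nonneg.2 hst)]
        calc ‖g s - g t‖ ≤ φ' (R s) * ((s - t) * ‖d‖) := h1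
          _ ≤ φ' b * ((s - t) * ‖d‖) := h3
          _ = φ' b * ‖d‖ * (s - t) := by ring
      calc |f s - f t| ≤ ‖g s - g t‖ := by
            simp only [hf]
            have h4 := abs_norm_sub_norm_le (g s - g 0) (g t - g 0)
            have h5 : (g s - g 0) - (g t - g 0) = g s - g t := by abel
            rw [h5] at h4
            exact h4
        _ ≤ φ' b * ‖d‖ * |s - t| := key
    have hlipf : LipschitzOnWith (Real.toNNReal (φ' b * ‖d‖)) f (Icc 0 1) := by
      apply LipschitzOnWith.of_dist_le_mul
      intro s hs t ht
      rw [Real.coe_toNNReal _ hC, Real.dist_eq, Real.dist_eq]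
      rcases le_total t s with h | h
      · exact haux s hs t ht h
      · rw [abs_sub_comm (f s), abs_sub_comm s]
        exact haux t ht s hs h
    exact hlipf.continuousOn
  have hgsub : ∀ s t : ℝ, 0 ≤ s → s ≤ t → t ≤ 1 → f t - f s ≤ ‖g t - g s‖ := by
    intro s t hs hst ht1
    simp only [hf]
    have := norm_sub_norm_le (g t - g 0) (g s - g 0)
    have heq : (g t - g 0) - (g s - g 0) = g t - g s := by abel
    rw [heq] at this
    linarith
  set B : ℝ → ℝ := fun s => φ (R s) - φ a with hB
  have hRcont : Continuous R := by continuity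
  have hφcont : ContinuousOn φ (Icc 0 r) := fun w hw =>
    (hderiv w hw).continuousAt.continuousWithinAt
  have hBcont : ContinuousOn B (Icc 0 1) := by
    apply ContinuousOn.sub _ continuousOn_const
    exact hφcont.comp hRcont.continuousOn (fun s hs => hRmem s hs)
  have hB' : ∀ s ∈ Ico (0:ℝ) 1, HasDerivWithinAt B (φ' (R s) * δ) (Ici s) s := by
    intro s hs
    have h1 : HasDerivAt R δ s := by
      rw [hR]; simpa [mul_comm] using ((hasDerivAt_id s).const_mul δ).const_add a
    have h2 : HasDerivAt φ (φ' (R s)) (R s) := hderiv (R s) (hRmem s ⟨hs.1, hs.2.le⟩)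
    have h3 : HasDerivAt (fun t => φ (R t)) (φ' (R s) * δ) s := h2.comp s h1
    exact (h3.sub_const (φ a)).hasDerivWithinAt
  have hslope : ∀ s ∈ Ico (0:ℝ) 1, ∀ ρ, φ' (R s) * δ < ρ →
      ∃ᶠ z in 𝓝[>] s, slope f s z < ρ := by
    intro s hs ρ hρ
    have hfs : φ' (R s) * ‖d‖ < ρ := by
      have h1 : φ' (R s) * ‖d‖ ≤ φ' (R s) * δ :=
        mul_le_mul_of_nonneg_left hz (hφ'nonneg _ (hRmem s ⟨hs.1, hs.2.le⟩))
      linarith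
    have hcw : ContinuousWithinAt (fun u => φ' (R u) * ‖d‖) (Icc 0 1) s := by
      apply ContinuousWithinAt.mul _ continuousWithinAt_const
      exact (hφ'cont.comp hRcont.continuousOn (fun u hu => hRmem u hu)) s ⟨hs.1, hs.2.le⟩
    have hle : 𝓝[Ioo s 1] s ≤ 𝓝[Icc (0:ℝ) 1] s :=
      nhdsWithin_mono s (fun u hu => ⟨hs.1.trans hu.1.le, hu.2.le⟩)
    have hne : (𝓝[Ioo s 1] s).NeBot := left_nhdsWithin_Ioo_neBot hs.2
    have hev1 : ∀ᶠ u in 𝓝[Ioo s 1] s, φ' (R u) * ‖d‖ < ρ := by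
      have : Tendsto (fun u => φ' (R u) * ‖d‖) (𝓝[Ioo s 1] s) (𝓝 (φ' (R s) * ‖d‖)) :=
        hcw.tendsto.mono_left hle
      exact this.eventually (Filter.Tendsto.eventually_lt_const hfs tendsto_id)
    have hev2 : ∀ᶠ u in 𝓝[Ioo s 1] s, u ∈ Ioo s 1 := self_mem_nhdsWithin
    have hev : ∀ᶠ u in 𝓝[Ioo s 1] s, slope f s u < ρ := by
      filter_upwards [hev1, hev2] with u h1 h2
      have hus : 0 < u - s := sub_pos.2 h2.1
      have hfu : f u - f s ≤ φ' (R u) * ((u - s) * ‖d‖) :=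
        (hgsub s u hs.1 h2.1.le h2.2.le).trans (hpair s u hs.1 h2.1.le h2.2.le)
      rw [slope_def_field]
      rw [div_lt_iff₀ hus]
      calc f u - f s ≤ φ' (R u) * ((u - s) * ‖d‖) := hfu
        _ = (φ' (R u) * ‖d‖) * (u - s) := by ring
        _ < ρ * (u - s) := by
            exact mul_lt_mul_of_pos_right h1 hus
    exact (hev.frequently).filter_mono (nhdsWithin_mono s Ioo_subset_Ioi_self)
  have ha0 : f 0 ≤ B 0 := by
    simp only [hf, hB, hR]
    simp
  have hmain : f 1 ≤ B 1 :=
    image_le_of_liminf_slope_right_le_deriv_boundary hfcont ha0 hBcont hB' hslope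
      (right_mem_Icc.2 zero_le_one)
  have hyd : y + (1:ℝ) • d = z := by rw [one_smul, hd]; abel
  have hy0' : y + (0:ℝ) • d = y := by rw [zero_smul, add_zero]
  have hf1 : f 1 = ‖T z - T y‖ := by
    simp only [hf, hg, hyd, hy0']
  have hB1 : B 1 = φ b - φ a := by
    simp only [hB, hR]
    rw [show a + 1 * δ = b by rw [hδ]; ring]
  rw [hf1, hB1] at hmain
  exact hmain

theorem stmt_2 {X : Type*} [NormedAddCommGroup X] [NormedSpace ℝ X] [CompleteSpace X]
    (T : X → X) (x0 : X) (r : ℝ) (hr : 0 < r)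
    (φ φ' : ℝ → ℝ)
    (hderiv : ∀ v ∈ Icc (0:ℝ) r, HasDerivAt φ (φ' v) v)
    (hφ'cont : ContinuousOn φ' (Icc 0 r))
    (hφ'nonneg : ∀ v ∈ Icc (0:ℝ) r, 0 ≤ φ' v)
    (hφ'mono : MonotoneOn φ' (Icc 0 r))
    (hlip : ∀ v ∈ Icc (0:ℝ) r, ∀ x ∈ closedBall x0 v, ∀ y ∈ closedBall x0 v,
      ‖T x - T y‖ ≤ φ' v * ‖x - y‖)
    (hη : ‖T x0 - x0‖ ≤ φ 0)
    (vstar : ℝ) (hvstar : vstar ∈ Icc 0 r) (hfix : φ vstar = vstar)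
    (hmin : ∀ w ∈ Icc 0 r, φ w = w → vstar ≤ w)
    (v : ℕ → ℝ) (hv0 : v 0 = 0) (hvrec : ∀ k, v (k + 1) = φ (v k))
    (x : ℕ → X) (hx0 : x 0 = x0) (hxrec : ∀ k, x (k + 1) = T (x k)) :
    (∀ k, x k ∈ closedBall x0 vstar) ∧
    (∀ k, ‖x (k + 1) - x k‖ ≤ v (k + 1) - v k) ∧
    ∃ xstar ∈ closedBall x0 vstar, T xstar = xstar ∧
      Tendsto x atTop (nhds xstar) ∧ ∀ k, ‖xstar - x k‖ ≤ vstar - v k := by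
  have hvs0 : 0 ≤ vstar := hvstar.1
  have hvsr : vstar ≤ r := hvstar.2
  have hφcont : ContinuousOn φ (Icc 0 r) := fun w hw =>
    (hderiv w hw).continuousAt.continuousWithinAt
  have hφmono : MonotoneOn φ (Icc 0 r) := by
    apply monotoneOn_of_deriv_nonneg (convex_Icc 0 r) hφcont
    · intro w hw
      rw [interior_Icc] at hw
      exact (hderiv w ⟨hw.1.le, hw.2.le⟩).differentiableAt.differentiableWithinAt
    · intro w hw
      rw [interior_Icc] at hw
      rw [(hderiv w ⟨hw.1.le, hw.2.le⟩).deriv]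
      exact hφ'nonneg w ⟨hw.1.le, hw.2.le⟩
  have hφ0 : 0 ≤ φ 0 := le_trans (norm_nonneg _) hη
  have h0r : (0:ℝ) ∈ Icc (0:ℝ) r := ⟨le_refl 0, hr.le⟩
  have hbnd : ∀ k, 0 ≤ v k ∧ v k ≤ vstar := by
    intro k; induction k with
    | zero => rw [hv0]; exact ⟨le_refl 0, hvs0⟩
    | succ k ih =>
      have hmem : v k ∈ Icc (0:ℝ) r := ⟨ih.1, ih.2.trans hvsr⟩
      constructor
      · rw [hvrec]
        calc (0:ℝ) ≤ φ 0 := hφ0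
          _ ≤ φ (v k) := hφmono h0r hmem ih.1
      · rw [hvrec]
        calc φ (v k) ≤ φ vstar := hφmono hmem hvstar ih.2
          _ = vstar := hfix
  have hvmem : ∀ k, v k ∈ Icc (0:ℝ) r := fun k => ⟨(hbnd k).1, (hbnd k).2.trans hvsr⟩
  have hvmono1 : ∀ k, v k ≤ v (k + 1) := by
    intro k; induction k with
    | zero => rw [hv0, hvrec, hv0]; exact hφ0
    | succ k ih =>
      calc v (k + 1) = φ (v k) := hvrec k
        _ ≤ φ (v (k + 1)) := hφmono (hvmem k) (hvmem (k + 1)) ih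
        _ = v (k + 1 + 1) := (hvrec (k + 1)).symm
  have hvmono : Monotone v := monotone_nat_of_le_succ hvmono1
  have hQ : ∀ k, ‖x k - x0‖ ≤ v k ∧ ‖x (k + 1) - x k‖ ≤ v (k + 1) - v k := by
    intro k; induction k with
    | zero =>
      constructor
      · rw [hx0, hv0]; simp
      · rw [hxrec, hx0, hvrec, hv0, sub_zero]; exact hη
    | succ k ih =>
      have hxk1 : ‖x (k + 1) - x0‖ ≤ v (k + 1) := by
        have htri : ‖x (k + 1) - x0‖ ≤ ‖x (k + 1) - x k‖ + ‖x k - x0‖ := by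
          have : x (k + 1) - x0 = (x (k + 1) - x k) + (x k - x0) := by abel
          rw [this]; exact norm_add_le _ _
        linarith [ih.1, ih.2]
      refine ⟨hxk1, ?_⟩
      have hks := key_step T x0 r φ φ' hderiv hφ'cont hφ'nonneg hφ'mono hlip
        (hvmem k).1 (hvmono1 k) (hvmem (k + 1)).2
        (by rw [mem_closedBall, dist_eq_norm]; exact ih.1) ih.2
      rw [← hxrec k, ← hvrec k] at hks
      rw [hxrec (k + 1), hvrec (k + 1)]
      exact hks
  have hball : ∀ k, x k ∈ closedBall x0 vstar := by
    intro k
    rw [mem_closedBall, dist_eq_norm]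
    exact (hQ k).1.trans (hbnd k).2
  have hchain : ∀ n m, n ≤ m → ‖x m - x n‖ ≤ v m - v n := by
    intro n m hnm
    induction m, hnm using Nat.le_induction with
    | base => simp
    | succ m hnm ih =>
      have htri : ‖x (m + 1) - x n‖ ≤ ‖x (m + 1) - x m‖ + ‖x m - x n‖ := by
        have : x (m + 1) - x n = (x (m + 1) - x m) + (x m - x n) := by abel
        rw [this]; exact norm_add_le _ _
      linarith [(hQ m).2]
  -- v tends to vstar
  have hbdd : BddAbove (Set.range v) := ⟨vstar, by rintro _ ⟨k, rfl⟩; exact (hbnd k).2⟩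
  have hvlimL : Tendsto v atTop (𝓝 (⨆ k, v k)) := tendsto_atTop_ciSup hvmono hbdd
  set L := ⨆ k, v k with hLdef
  have hLle : L ≤ vstar := ciSup_le fun k => (hbnd k).2
  have h0L : 0 ≤ L := le_trans (hbnd 0).1 (le_ciSup hbdd 0)
  have hLmem : L ∈ Icc (0:ℝ) r := ⟨h0L, hLle.trans hvsr⟩
  have hφL : φ L = L := by
    have h1 : Tendsto (fun k => v (k + 1)) atTop (𝓝 L) :=
      hvlimL.comp (tendsto_add_atTop_nat 1)
    have h2 : Tendsto (fun k => φ (v k)) atTop (𝓝 (φ L)) := by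
      have h3 : Tendsto v atTop (𝓝[Icc (0:ℝ) r] L) :=
        tendsto_nhdsWithin_of_tendsto_nhds_of_eventually_within v hvlimL
          (Eventually.of_forall hvmem)
      exact ((hφcont L hLmem).tendsto).comp h3
    have h4 : (fun k => v (k + 1)) = fun k => φ (v k) := funext hvrec
    rw [h4] at h1
    exact tendsto_nhds_unique h2 h1
  have hLvs : L = vstar := le_antisymm hLle (hmin L hLmem hφL)
  have hvlim : Tendsto v atTop (𝓝 vstar) := hLvs ▸ hvlimL
  -- x is Cauchy
  have hcauchy : CauchySeq x := by
    apply cauchySeq_of_le_tendsto_0 (fun N => vstar - v N)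
    · intro n m N hn hm
      rcases le_total n m with h | h
      · rw [dist_eq_norm, norm_sub_rev]
        calc ‖x m - x n‖ ≤ v m - v n := hchain n m h
          _ ≤ vstar - v N := by linarith [(hbnd m).2, hvmono hn]
      · rw [dist_eq_norm]
        calc ‖x n - x m‖ ≤ v n - v m := hchain m n h
          _ ≤ vstar - v N := by linarith [(hbnd n).2, hvmono hm]
    · have h := (tendsto_const_nhds : Tendsto (fun _ : ℕ => vstar) atTop (𝓝 vstar)).sub hvlim
      simpa using h
  obtain ⟨xstar, hxlim⟩ := cauchySeq_tendsto_of_complete hcauchy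
  have hxsk : ∀ k, ‖xstar - x k‖ ≤ vstar - v k := by
    intro k
    have h1 : Tendsto (fun m => ‖x m - x k‖) atTop (𝓝 ‖xstar - x k‖) :=
      ((hxlim.sub tendsto_const_nhds).norm)
    apply le_of_tendsto h1
    filter_upwards [eventually_ge_atTop k] with m hm
    calc ‖x m - x k‖ ≤ v m - v k := hchain k m hm
      _ ≤ vstar - v k := by linarith [(hbnd m).2]
  have hxsball : xstar ∈ closedBall x0 vstar := by
    rw [mem_closedBall, dist_eq_norm]
    have := hxsk 0
    rw [hx0, hv0, sub_zero] at this
    exact this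
  have hTfix : T xstar = xstar := by
    have h1 : Tendsto (fun k => ‖x k - xstar‖) atTop (𝓝 0) := by
      have := (hxlim.sub (tendsto_const_nhds : Tendsto (fun _ : ℕ => xstar) atTop (𝓝 xstar))).norm
      simpa using this
    have h2 : Tendsto (fun k => ‖T (x k) - T xstar‖) atTop (𝓝 0) := by
      apply squeeze_zero (fun k => norm_nonneg _)
        (fun k => hlip vstar hvstar (x k) (hball k) xstar hxsball)
      have := h1.const_mul (φ' vstar)
      simpa using this
    have h3 : Tendsto (fun k => T (x k)) atTop (𝓝 (T xstar)) := by
      rw [tendsto_iff_norm_sub_tendsto_zero]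
      exact h2
    have h4 : Tendsto (fun k => x (k + 1)) atTop (𝓝 xstar) :=
      hxlim.comp (tendsto_add_atTop_nat 1)
    have h5 : (fun k => x (k + 1)) = fun k => T (x k) := funext hxrec
    rw [h5] at h4
    exact tendsto_nhds_unique h3 h4
  exact ⟨hball, fun k => (hQ k).2, xstar, hxsball, hTfix, hxlim, hxsk⟩
end

section
/- Under the hypotheses of the majorization theorem, if additionally φ(r) ≤ r and v = φ(v) has a unique solution in [0,r], then T has a unique fixed point x_* in B̄(x_0, r), and for any starting point x̃_0 ∈ B̄(x_0, r) the sequence x̃_{k+1} = T(x̃_k) converges to x_*. -/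
open Set Filter Metric Topology

lemma radial_est {X : Type*} [NormedAddCommGroup X] [NormedSpace ℝ X]
    (T : X → X) (x0 : X) (r : ℝ)
    (φ φ' : ℝ → ℝ)
    (hderiv : ∀ v ∈ Icc (0:ℝ) r, HasDerivAt φ (φ' v) v)
    (hφ'cont : ContinuousOn φ' (Icc 0 r))
    (hφ'nonneg : ∀ v ∈ Icc (0:ℝ) r, 0 ≤ φ' v)
    (hlip : ∀ v ∈ Icc (0:ℝ) r, ∀ x ∈ closedBall x0 v, ∀ y ∈ closedBall x0 v,
      ‖T x - T y‖ ≤ φ' v * ‖x - y‖)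
    {t s : ℝ} (ht : 0 ≤ t) (hts : t ≤ s) (hsr : s ≤ r)
    {x y : X} (hx : ‖x - x0‖ ≤ t) (hxy : ‖y - x‖ ≤ s - t) :
    ‖T y - T x‖ ≤ φ s - φ t := by
  rcases eq_or_lt_of_le hts with rfl | hts'
  · have : y = x := by
      have : ‖y - x‖ ≤ 0 := by linarith
      have := le_antisymm this (norm_nonneg _)
      rwa [norm_sub_eq_zero_iff] at this
    simp [this]
  have hst : (0:ℝ) < s - t := by linarith
  set z : ℝ → X := fun v => x + ((v - t)/(s - t)) • (y - x) with hz
  have hzmem : ∀ v ∈ Icc t s, ‖z v - x0‖ ≤ v := by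
    intro v hv
    have hc0 : 0 ≤ (v - t)/(s - t) := div_nonneg (by linarith [hv.1]) hst.le
    have : z v - x0 = (x - x0) + ((v - t)/(s - t)) • (y - x) := by
      simp [hz]; abel
    rw [this]
    calc ‖(x - x0) + ((v - t)/(s - t)) • (y - x)‖
        ≤ ‖x - x0‖ + ‖((v - t)/(s - t)) • (y - x)‖ := norm_add_le _ _
      _ ≤ t + ((v - t)/(s - t)) * (s - t) := by
          rw [norm_smul, Real.norm_of_nonneg hc0]
          exact add_le_add hx (by nlinarith [norm_nonneg (y - x)])
      _ = v := by field_simp; ring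
  have hzdiff : ∀ v w : ℝ, v ≤ w → ‖z w - z v‖ ≤ w - v := by
    intro v w hvw
    have : z w - z v = ((w - v)/(s - t)) • (y - x) := by
      simp only [hz]
      rw [add_sub_add_left_eq_sub, ← sub_smul]
      congr 1
      field_simp; ring
    rw [this, norm_smul, Real.norm_of_nonneg (div_nonneg (by linarith) hst.le)]
    calc (w - v)/(s - t) * ‖y - x‖ ≤ (w - v)/(s - t) * (s - t) := by
          apply mul_le_mul_of_nonneg_left hxy (div_nonneg (by linarith) hst.le)
      _ = w - v := by field_simp
  have hzcont : Continuous z := by continuity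
  have hTlip : LipschitzOnWith (Real.toNNReal (φ' r)) T (closedBall x0 r) := by
    apply LipschitzOnWith.of_dist_le_mul
    intro a ha b hb
    rw [dist_eq_norm, dist_eq_norm, Real.coe_toNNReal _ (hφ'nonneg r ⟨by linarith, le_rfl⟩)]
    exact hlip r ⟨by linarith, le_rfl⟩ a ha b hb
  have hzr : ∀ v ∈ Icc t s, z v ∈ closedBall x0 r := by
    intro v hv
    rw [mem_closedBall, dist_eq_norm]
    exact (hzmem v hv).trans (hv.2.trans hsr)
  have hfcont : ContinuousOn (fun v => ‖T (z v) - T x‖) (Icc t s) := by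
    apply ContinuousOn.norm
    exact ((hTlip.continuousOn.comp hzcont.continuousOn hzr).sub continuousOn_const)
  have key := image_le_of_liminf_slope_right_le_deriv_boundary (B := fun v => φ v - φ t)
    (B' := φ') hfcont ?_ ?_ ?_ ?_ (right_mem_Icc.2 hts)
  · have hzs : z s = y := by simp [hz, div_self hst.ne']
    rwa [hzs] at key
  · have hzt : z t = x := by simp [hz]
    simp [hzt]
  · apply ContinuousOn.sub _ continuousOn_const
    intro v hv
    exact ((hderiv v ⟨le_trans ht hv.1, le_trans hv.2 hsr⟩).continuousAt).continuousWithinAt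
  · intro v hv
    exact ((hderiv v ⟨le_trans ht hv.1, le_trans hv.2.le hsr⟩).hasDerivWithinAt).sub_const _
  · intro v hv q hq
    apply Filter.Eventually.frequently
    have hv0 : v ∈ Icc (0:ℝ) r := ⟨le_trans ht hv.1, le_trans hv.2.le hsr⟩
    have h1 : ∀ᶠ w in 𝓝[>] v, w ∈ Ioc v s := Ioc_mem_nhdsGT_of_mem ⟨le_rfl, hv.2⟩
    have h2 : Tendsto φ' (𝓝[Ioc v s] v) (𝓝 (φ' v)) := by
      apply (hφ'cont v hv0).mono
      intro w hw
      exact ⟨le_trans hv0.1 hw.1.le, hw.2.trans hsr⟩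
    have h3 : ∀ᶠ w in 𝓝[Ioc v s] v, φ' w < q := h2.eventually_lt_const hq
    rw [show Ioc v s = Ioi v ∩ Ioc v s by simp [inter_eq_right.2 Ioc_subset_Ioi_self],
      nhdsWithin_inter', eventually_inf_principal] at h3
    filter_upwards [h1, h3] with w hw hwq
    have hwvs : w ∈ Icc t s := ⟨le_trans hv.1 hw.1.le, hw.2⟩
    have hwq' := hwq hw
    have hslope : slope (fun v => ‖T (z v) - T x‖) v w ≤ φ' w := by
      rw [slope_def_field]
      have hnum : ‖T (z w) - T x‖ - ‖T (z v) - T x‖ ≤ φ' w * (w - v) := by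
        calc ‖T (z w) - T x‖ - ‖T (z v) - T x‖ ≤ ‖T (z w) - T (z v)‖ := by
              have := norm_sub_norm_le (T (z w) - T x) (T (z v) - T x)
              simpa using this
          _ ≤ φ' w * ‖z w - z v‖ := by
              apply hlip w ⟨le_trans hv0.1 hw.1.le, hwvs.2.trans hsr⟩
              · rw [mem_closedBall, dist_eq_norm]
                exact (hzmem w hwvs).trans le_rfl
              · rw [mem_closedBall, dist_eq_norm]
                exact (hzmem v ⟨hv.1, hv.2.le⟩).trans hw.1.le
          _ ≤ φ' w * (w - v) := by
              apply mul_le_mul_of_nonneg_left (hzdiff v w hw.1.le)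
                (hφ'nonneg w ⟨le_trans hv0.1 hw.1.le, hwvs.2.trans hsr⟩)
      rw [div_le_iff₀ (by linarith [hw.1] : (0:ℝ) < w - v)]
      linarith
    exact lt_of_le_of_lt hslope hwq'

theorem stmt_3 {X : Type*} [NormedAddCommGroup X] [NormedSpace ℝ X] [CompleteSpace X]
    (T : X → X) (x0 : X) (r : ℝ) (hr : 0 < r)
    (φ φ' : ℝ → ℝ)
    (hderiv : ∀ v ∈ Icc (0:ℝ) r, HasDerivAt φ (φ' v) v)
    (hφ'cont : ContinuousOn φ' (Icc 0 r))
    (hφ'nonneg : ∀ v ∈ Icc (0:ℝ) r, 0 ≤ φ' v)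
    (hφ'mono : MonotoneOn φ' (Icc 0 r))
    (hlip : ∀ v ∈ Icc (0:ℝ) r, ∀ x ∈ closedBall x0 v, ∀ y ∈ closedBall x0 v,
      ‖T x - T y‖ ≤ φ' v * ‖x - y‖)
    (hη : ‖T x0 - x0‖ ≤ φ 0)
    (hφr : φ r ≤ r)
    (huniq : ∃! w, w ∈ Icc (0:ℝ) r ∧ φ w = w) :
    ∃ xstar ∈ closedBall x0 r, T xstar = xstar ∧
      (∀ y ∈ closedBall x0 r, T y = y → y = xstar) ∧
      (∀ y0 ∈ closedBall x0 r, Tendsto (fun k => T^[k] y0) atTop (nhds xstar)) := by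
  obtain ⟨w, ⟨⟨hw0, hwr⟩, hwfix⟩, hwuniq⟩ := huniq
  have hφcont : ContinuousOn φ (Icc 0 r) := fun v hv =>
    (hderiv v hv).continuousAt.continuousWithinAt
  have hφmono : MonotoneOn φ (Icc 0 r) := by
    apply monotoneOn_of_deriv_nonneg (convex_Icc 0 r) hφcont
    · intro v hv
      rw [interior_Icc] at hv
      exact ((hderiv v ⟨hv.1.le, hv.2.le⟩).differentiableAt).differentiableWithinAt
    · intro v hv
      rw [interior_Icc] at hv
      rw [(hderiv v ⟨hv.1.le, hv.2.le⟩).deriv]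
      exact hφ'nonneg v ⟨hv.1.le, hv.2.le⟩
  have hφ0 : 0 ≤ φ 0 := le_trans (norm_nonneg _) hη
  set t : ℕ → ℝ := fun k => φ^[k] 0 with htdef
  set u : ℕ → ℝ := fun k => φ^[k] r with hudef
  have htsucc : ∀ k, t (k+1) = φ (t k) := fun k => Function.iterate_succ_apply' φ k 0
  have husucc : ∀ k, u (k+1) = φ (u k) := fun k => Function.iterate_succ_apply' φ k r
  have ht0 : t 0 = 0 := rfl
  have hu0 : u 0 = r := rfl
  -- facts about t
  have htfacts : ∀ k, 0 ≤ t k ∧ t k ≤ w ∧ t k ≤ t (k+1) := by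
    intro k
    induction k with
    | zero => exact ⟨le_rfl, hw0, by rw [htsucc, ht0]; exact hφ0⟩
    | succ k ih =>
      obtain ⟨h0, hw, hmono⟩ := ih
      have hmem : t k ∈ Icc (0:ℝ) r := ⟨h0, le_trans hw hwr⟩
      have hmem' : t (k+1) ∈ Icc (0:ℝ) r := ⟨le_trans h0 hmono, by
        rw [htsucc]; exact le_trans (hφmono hmem ⟨hw0, hwr⟩ hw) (hwfix.le.trans hwr)⟩
      refine ⟨le_trans h0 hmono, ?_, ?_⟩
      · rw [htsucc]
        calc φ (t k) ≤ φ w := hφmono hmem ⟨hw0, hwr⟩ hw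
          _ = w := hwfix
      · rw [htsucc, htsucc]
        exact hφmono hmem hmem' hmono
  have htmem : ∀ k, t k ∈ Icc (0:ℝ) r :=
    fun k => ⟨(htfacts k).1, le_trans (htfacts k).2.1 hwr⟩
  -- facts about u
  have hufacts : ∀ k, w ≤ u k ∧ u k ≤ r ∧ u (k+1) ≤ u k := by
    intro k
    induction k with
    | zero => exact ⟨hwr, le_rfl, by rw [husucc, hu0]; exact hφr⟩
    | succ k ih =>
      obtain ⟨hwu, hur, hdec⟩ := ih
      have hmem : u k ∈ Icc (0:ℝ) r := ⟨le_trans hw0 hwu, hur⟩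
      have hmem' : u (k+1) ∈ Icc (0:ℝ) r := ⟨le_trans hw0 (by
        rw [husucc, ← hwfix]; exact hφmono ⟨hw0, hwr⟩ hmem hwu), le_trans hdec hur⟩
      refine ⟨?_, le_trans hdec hur, ?_⟩
      · rw [husucc, ← hwfix]
        exact hφmono ⟨hw0, hwr⟩ hmem hwu
      · calc u (k+2) = φ (u (k+1)) := husucc _
          _ ≤ φ (u k) := hφmono hmem' hmem hdec
          _ = u (k+1) := (husucc k).symm
  have humem : ∀ k, u k ∈ Icc (0:ℝ) r := fun k => ⟨le_trans hw0 (hufacts k).1, (hufacts k).2.1⟩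
  -- t converges to w
  have htmono : Monotone t := monotone_nat_of_le_succ fun k => (htfacts k).2.2
  have htbdd : BddAbove (range t) := ⟨w, by rintro _ ⟨k, rfl⟩; exact (htfacts k).2.1⟩
  have htlimL : Tendsto t atTop (𝓝 (⨆ k, t k)) := tendsto_atTop_ciSup htmono htbdd
  have hfixlim : ∀ (v : ℕ → ℝ) (L : ℝ), (∀ k, v k ∈ Icc (0:ℝ) r) → L ∈ Icc (0:ℝ) r →
      (∀ k, v (k+1) = φ (v k)) → Tendsto v atTop (𝓝 L) → L = w := by
    intro v L hvmem hLmem hvsucc hvlim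
    have h1 : Tendsto v atTop (𝓝[Icc (0:ℝ) r] L) :=
      tendsto_nhdsWithin_of_tendsto_nhds_of_eventually_within _ hvlim
        (Eventually.of_forall hvmem)
    have h2 : Tendsto (fun k => φ (v k)) atTop (𝓝 (φ L)) :=
      ((hφcont L hLmem).tendsto).comp h1
    have h3 : Tendsto (fun k => v (k+1)) atTop (𝓝 L) :=
      hvlim.comp (tendsto_add_atTop_nat 1)
    have h4 : φ L = L := tendsto_nhds_unique (by simpa only [← hvsucc] using h2) h3
    exact hwuniq L ⟨hLmem, h4⟩
  have hsupmem : (⨆ k, t k) ∈ Icc (0:ℝ) r := by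
    constructor
    · exact le_trans (htfacts 0).1 (le_ciSup htbdd 0)
    · exact ciSup_le fun k => (htmem k).2
  have htlim : Tendsto t atTop (𝓝 w) := by
    rwa [hfixlim t _ htmem hsupmem htsucc htlimL] at htlimL
  -- u converges to w
  have huanti : Antitone u := antitone_nat_of_succ_le fun k => (hufacts k).2.2
  have hubdd : BddBelow (range u) := ⟨w, by rintro _ ⟨k, rfl⟩; exact (hufacts k).1⟩
  have hulimM : Tendsto u atTop (𝓝 (⨅ k, u k)) := tendsto_atTop_ciInf huanti hubdd
  have hinfmem : (⨅ k, u k) ∈ Icc (0:ℝ) r := by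
    constructor
    · exact le_trans hw0 (le_ciInf fun k => (hufacts k).1)
    · exact le_trans (ciInf_le hubdd 0) (hufacts 0).2.1
  have hulim : Tendsto u atTop (𝓝 w) := by
    rwa [hfixlim u _ humem hinfmem husucc hulimM] at hulimM
  -- iterates of x0
  set x : ℕ → X := fun k => T^[k] x0 with hxdef
  have hxsucc : ∀ k, x (k+1) = T (x k) := fun k => Function.iterate_succ_apply' T k x0
  have hx0 : x 0 = x0 := rfl
  have hxfacts : ∀ k, ‖x k - x0‖ ≤ t k ∧ ‖x (k+1) - x k‖ ≤ t (k+1) - t k := by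
    intro k
    induction k with
    | zero =>
      constructor
      · simp [hx0, ht0]
      · rw [hxsucc, hx0, htsucc, ht0]
        simpa using hη
    | succ k ih =>
      obtain ⟨ha, hb⟩ := ih
      constructor
      · calc ‖x (k+1) - x0‖ = ‖(x (k+1) - x k) + (x k - x0)‖ := by abel_nf
          _ ≤ ‖x (k+1) - x k‖ + ‖x k - x0‖ := norm_add_le _ _
          _ ≤ t (k+1) := by linarith
      · have hest := radial_est T x0 r φ φ' hderiv hφ'cont hφ'nonneg hlip
          (htfacts k).1 (htfacts k).2.2 (htmem (k+1)).2 ha hb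
        rw [← hxsucc (k+1), ← hxsucc k, ← htsucc (k+1), ← htsucc k] at hest
        exact hest
  -- telescoping
  have htel : ∀ k m, k ≤ m → ‖x m - x k‖ ≤ t m - t k := by
    intro k m hkm
    induction m, hkm using Nat.le_induction with
    | base => simp
    | succ m hkm ih =>
      calc ‖x (m+1) - x k‖ = ‖(x (m+1) - x m) + (x m - x k)‖ := by abel_nf
        _ ≤ ‖x (m+1) - x m‖ + ‖x m - x k‖ := norm_add_le _ _
        _ ≤ t (m+1) - t k := by linarith [(hxfacts m).2]
  -- x is Cauchy
  have hcauchy : CauchySeq x := by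
    apply cauchySeq_of_le_tendsto_0 (fun N => w - t N)
    · intro n m N hn hm
      rcases le_total n m with h | h
      · rw [dist_eq_norm, norm_sub_rev]
        calc ‖x m - x n‖ ≤ t m - t n := htel n m h
          _ ≤ w - t N := by linarith [(htfacts m).2.1, htmono hn]
      · rw [dist_eq_norm]
        calc ‖x n - x m‖ ≤ t n - t m := htel m n h
          _ ≤ w - t N := by linarith [(htfacts n).2.1, htmono hm]
    · have h0 : Tendsto (fun N => w - t N) atTop (𝓝 (w - w)) :=
        tendsto_const_nhds.sub htlim
      simpa using h0
  obtain ⟨xstar, hxstar⟩ := cauchySeq_tendsto_of_complete hcauchy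
  have hxball : ∀ k, x k ∈ closedBall x0 r := by
    intro k
    rw [mem_closedBall, dist_eq_norm]
    exact le_trans (hxfacts k).1 (htmem k).2
  have hxstarball : xstar ∈ closedBall x0 r :=
    isClosed_closedBall.mem_of_tendsto hxstar (Eventually.of_forall hxball)
  -- T xstar = xstar
  have hTlip : LipschitzOnWith (Real.toNNReal (φ' r)) T (closedBall x0 r) := by
    apply LipschitzOnWith.of_dist_le_mul
    intro a ha b hb
    rw [dist_eq_norm, dist_eq_norm, Real.coe_toNNReal _ (hφ'nonneg r ⟨hr.le, le_rfl⟩)]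
    exact hlip r ⟨hr.le, le_rfl⟩ a ha b hb
  have hTfix : T xstar = xstar := by
    have h1 : Tendsto x atTop (𝓝[closedBall x0 r] xstar) :=
      tendsto_nhdsWithin_of_tendsto_nhds_of_eventually_within _ hxstar
        (Eventually.of_forall hxball)
    have h2 : Tendsto (fun k => T (x k)) atTop (𝓝 (T xstar)) :=
      ((hTlip.continuousOn xstar hxstarball).tendsto).comp h1
    have h3 : Tendsto (fun k => x (k+1)) atTop (𝓝 xstar) :=
      hxstar.comp (tendsto_add_atTop_nat 1)
    exact tendsto_nhds_unique (by simpa only [← hxsucc] using h2) h3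
  -- convergence of arbitrary iterates
  have hconv : ∀ y0 ∈ closedBall x0 r, Tendsto (fun k => T^[k] y0) atTop (𝓝 xstar) := by
    intro y0 hy0
    have hyfacts : ∀ k, ‖T^[k] y0 - x k‖ ≤ u k - t k := by
      intro k
      induction k with
      | zero =>
        simp only [Function.iterate_zero, id_eq, hx0, ht0, hu0, sub_zero]
        rw [← dist_eq_norm]
        exact hy0
      | succ k ih =>
        have hest := radial_est T x0 r φ φ' hderiv hφ'cont hφ'nonneg hlip
          (htfacts k).1 (le_trans (htfacts k).2.1 (hufacts k).1) (humem k).2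
          (hxfacts k).1 ih
        rw [← Function.iterate_succ_apply' T k y0, ← hxsucc k, ← husucc k,
          ← htsucc k] at hest
        exact hest
    rw [tendsto_iff_dist_tendsto_zero]
    apply squeeze_zero (fun k => dist_nonneg)
      (g := fun k => (u k - t k) + dist (x k) xstar)
    · intro k
      calc dist (T^[k] y0) xstar ≤ dist (T^[k] y0) (x k) + dist (x k) xstar :=
            dist_triangle _ _ _
        _ ≤ (u k - t k) + dist (x k) xstar := by
            rw [dist_eq_norm]; exact add_le_add_left (hyfacts k) _
    · have := (hulim.sub htlim).add (tendsto_iff_dist_tendsto_zero.1 hxstar)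
      simpa using this
  refine ⟨xstar, hxstarball, hTfix, ?_, hconv⟩
  intro y hy hyfix
  have h1 : Tendsto (fun k => T^[k] y) atTop (𝓝 xstar) := hconv y hy
  have h2 : ∀ k, T^[k] y = y := fun k => Function.iterate_fixed hyfix k
  have h3 : Tendsto (fun _ : ℕ => y) atTop (𝓝 xstar) := by
    simpa only [h2] using h1
  exact tendsto_nhds_unique tendsto_const_nhds h3
end

section
/- Let g(v) = l₀ v^{α+1}/(1+α) - (1-ν)v + η with l₀ > 0, η > 0, α ∈ (0,1], ν ∈ [0,1). If l₀ η^α ≤ (1-ν)^{α+1}(α/(1+α))^α, then g has a minimal root v_* in (0, r̄_*] where r̄_* = ((1-ν)/l₀)^{1/α}, and a maximal root v_{**} ≥ v_* in [r̄_*, ∞); these coincide exactly when equality holds in the condition. -/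
open Set Real

theorem stmt_5 (l0 η α ν : ℝ) (hl0 : 0 < l0) (hη : 0 < η)
    (hα : α ∈ Ioc (0:ℝ) 1) (hν0 : 0 ≤ ν) (hν1 : ν < 1)
    (g : ℝ → ℝ) (hg : ∀ v, g v = l0 * v ^ (α + 1) / (1 + α) - (1 - ν) * v + η)
    (rbar : ℝ) (hrbar : rbar = ((1 - ν) / l0) ^ (1 / α))
    (hcond : l0 * η ^ α ≤ (1 - ν) ^ (α + 1) * (α / (1 + α)) ^ α) :
    ∃ vstar ∈ Ioc 0 rbar, ∃ vss ∈ Ici rbar,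
      g vstar = 0 ∧ g vss = 0 ∧
      (∀ v, 0 ≤ v → g v = 0 → vstar ≤ v) ∧
      (∀ v, 0 ≤ v → g v = 0 → v ≤ vss) ∧
      vstar ≤ vss ∧
      (vstar = vss ↔ l0 * η ^ α = (1 - ν) ^ (α + 1) * (α / (1 + α)) ^ α) := by
  obtain ⟨hα1, hα2⟩ := hα
  have h1α : (0:ℝ) < 1 + α := by linarith
  have h1ν : (0:ℝ) < 1 - ν := by linarith
  have hrb0 : 0 < rbar := by
    rw [hrbar]; exact Real.rpow_pos_of_pos (by positivity) _
  have hrbα : rbar ^ α = (1 - ν) / l0 := by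
    rw [hrbar, one_div, Real.rpow_inv_rpow (by positivity) (ne_of_gt hα1)]
  -- derivative
  have hderiv : ∀ x : ℝ, HasDerivAt g (l0 * x ^ α - (1 - ν)) x := by
    intro x
    have h1 : HasDerivAt (fun v : ℝ => v ^ (α + 1)) ((α + 1) * x ^ α) x := by
      have := Real.hasDerivAt_rpow_const (p := α + 1) (x := x) (Or.inr (by linarith))
      simpa using this
    have h2 : HasDerivAt g (l0 * ((α + 1) * x ^ α) / (1 + α) - (1 - ν) * 1) x := by
      have hge : g = fun v => l0 * v ^ (α + 1) / (1 + α) - (1 - ν) * v + η := funext hg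
      rw [hge]
      exact (((h1.const_mul l0).div_const (1 + α)).sub
        ((hasDerivAt_id x).const_mul (1 - ν))).add_const η
    convert h2 using 1
    field_simp
    ring
  have hcont : Continuous g :=
    continuous_iff_continuousAt.2 fun x => (hderiv x).differentiableAt.continuousAt
  -- strict monotonicity
  have hanti : StrictAntiOn g (Icc 0 rbar) := by
    apply strictAntiOn_of_deriv_neg (convex_Icc _ _) hcont.continuousOn
    intro x hx
    rw [interior_Icc] at hx
    rw [(hderiv x).deriv]
    have hxα : x ^ α < (1 - ν) / l0 := hrbα ▸ Real.rpow_lt_rpow hx.1.le hx.2 hα1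
    have := mul_lt_mul_of_pos_left hxα hl0
    rw [mul_div_cancel₀ _ (ne_of_gt hl0)] at this
    linarith
  have hmono : StrictMonoOn g (Ici rbar) := by
    apply strictMonoOn_of_deriv_pos (convex_Ici _) hcont.continuousOn
    intro x hx
    rw [interior_Ici] at hx
    rw [(hderiv x).deriv]
    have hxα : (1 - ν) / l0 < x ^ α := hrbα ▸ Real.rpow_lt_rpow hrb0.le hx hα1
    have := mul_lt_mul_of_pos_left hxα hl0
    rw [mul_div_cancel₀ _ (ne_of_gt hl0)] at this
    linarith
  -- key values
  have hg0 : g 0 = η := by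
    rw [hg, Real.zero_rpow (by positivity)]; ring
  set K : ℝ := (1 - ν) * rbar * (α / (1 + α)) with hKdef
  have hK0 : 0 < K := by positivity
  have hgrbar : g rbar = η - K := by
    rw [hg]
    have h1 : rbar ^ (α + 1) = (1 - ν) / l0 * rbar := by
      rw [Real.rpow_add hrb0, hrbα, Real.rpow_one]
    rw [h1, hKdef]
    field_simp
    ring
  have hKα : l0 * K ^ α = (1 - ν) ^ (α + 1) * (α / (1 + α)) ^ α := by
    rw [hKdef, Real.mul_rpow (by positivity) (by positivity),
      Real.mul_rpow (by positivity) hrb0.le, hrbα, Real.rpow_add h1ν, Real.rpow_one]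
    field_simp
  have hcond' : η ≤ K := by
    rw [← hKα] at hcond
    have h := le_of_mul_le_mul_left hcond hl0
    exact (Real.rpow_le_rpow_iff hη.le hK0.le hα1).1 h
  have hcondeq : (η = K) ↔ l0 * η ^ α = (1 - ν) ^ (α + 1) * (α / (1 + α)) ^ α := by
    rw [← hKα]
    constructor
    · intro h; rw [h]
    · intro h
      have h2 : η ^ α = K ^ α := mul_left_cancel₀ (ne_of_gt hl0) h
      exact Real.rpow_left_injOn (ne_of_gt hα1) hη.le hK0.le h2
  have hgrb_le : g rbar ≤ 0 := by rw [hgrbar]; linarith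
  -- vstar via IVT on [0, rbar]
  obtain ⟨vstar, hvmem, hvroot⟩ :
      ∃ v ∈ Icc (0:ℝ) rbar, g v = 0 := by
    have := intermediate_value_Icc' hrb0.le hcont.continuousOn
      (by rw [hg0]; exact ⟨hgrb_le, hη.le⟩ : (0:ℝ) ∈ Icc (g rbar) (g 0))
    obtain ⟨v, hv, hv0⟩ := this
    exact ⟨v, hv, hv0⟩
  have hvstar0 : 0 < vstar := by
    rcases lt_or_eq_of_le hvmem.1 with h | h
    · exact h
    · exfalso
      rw [← h, hg0] at hvroot
      exact ne_of_gt hη hvroot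
  -- M with g M ≥ 0
  set b : ℝ := ((1 + α) * (1 - ν) / l0) ^ (1 / α) with hbdef
  set M : ℝ := max rbar b with hMdef
  have hb0 : 0 ≤ b := Real.rpow_nonneg (by positivity) _
  have hM0 : 0 < M := lt_of_lt_of_le hrb0 (le_max_left _ _)
  have hbα : b ^ α = (1 + α) * (1 - ν) / l0 := by
    rw [hbdef, one_div, Real.rpow_inv_rpow (by positivity) (ne_of_gt hα1)]
  have hMα : (1 + α) * (1 - ν) / l0 ≤ M ^ α :=
    hbα ▸ Real.rpow_le_rpow hb0 (le_max_right _ _) hα1.le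
  have hgM : 0 ≤ g M := by
    rw [hg]
    have h1 : M ^ (α + 1) = M ^ α * M := by
      rw [Real.rpow_add hM0, Real.rpow_one]
    rw [h1]
    have h2 : (1 + α) * (1 - ν) ≤ l0 * M ^ α := by
      have := mul_le_mul_of_nonneg_left hMα hl0.le
      rw [mul_div_cancel₀ _ (ne_of_gt hl0)] at this
      linarith [this]
    have h4 : (1 - ν) * M ≤ l0 * (M ^ α * M) / (1 + α) := by
      rw [le_div_iff₀ h1α]
      nlinarith
    linarith
  -- vss via IVT on [rbar, M]
  obtain ⟨vss, hssmem, hssroot⟩ : ∃ v ∈ Icc rbar M, g v = 0 := by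
    have := intermediate_value_Icc (le_max_left rbar b) hcont.continuousOn
      (⟨hgrb_le, hgM⟩ : (0:ℝ) ∈ Icc (g rbar) (g M))
    obtain ⟨v, hv, hv0⟩ := this
    exact ⟨v, hv, hv0⟩
  have hmin : ∀ v, 0 ≤ v → g v = 0 → vstar ≤ v := by
    intro v hv hgv
    rcases le_or_gt v rbar with h | h
    · have : v = vstar := hanti.injOn ⟨hv, h⟩ hvmem (by rw [hgv, hvroot])
      exact this.ge
    · exact le_trans hvmem.2 h.le
  have hmax : ∀ v, 0 ≤ v → g v = 0 → v ≤ vss := by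
    intro v hv hgv
    rcases le_or_gt rbar v with h | h
    · have : v = vss := hmono.injOn h hssmem.1 (by rw [hgv, hssroot])
      exact this.le
    · exact le_trans h.le hssmem.1
  refine ⟨vstar, ⟨hvstar0, hvmem.2⟩, vss, hssmem.1, hvroot, hssroot, hmin, hmax,
    le_trans hvmem.2 hssmem.1, ?_⟩
  rw [← hcondeq]
  constructor
  · intro h
    have hvr : vstar = rbar := le_antisymm hvmem.2 (h ▸ hssmem.1)
    have : g rbar = 0 := hvr ▸ hvroot
    rw [hgrbar] at this
    linarith
  · intro h
    have hgr0 : g rbar = 0 := by rw [hgrbar]; linarith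
    have h1 : vstar = rbar := hanti.injOn hvmem ⟨hrb0.le, le_refl _⟩ (by rw [hvroot, hgr0])
    have h2 : vss = rbar := hmono.injOn hssmem.1 (le_refl rbar) (by rw [hssroot, hgr0])
    rw [h1, h2]
end

section
/- Let φ(v) = η + ν·v + ∫₀^v (ω_B(l) - ν) dl where ω_B : [0,R] → ℝ is continuous, non-decreasing, non-negative with ω_B(0) = ν < 1 and η > 0. Define γ_* = sup{γ ∈ (0,R] : ω_B(γ) < 1}. If φ(γ_*) ≤ γ_*, then the equation v = φ(v) has a minimal solution v_* in [0,R] with v_* ≤ γ_*. -/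
open Set Real intervalIntegral

theorem stmt_9 (R η ν : ℝ) (hR : 0 < R) (hη : 0 < η) (hν0 : 0 ≤ ν) (hν1 : ν < 1)
    (ωB : ℝ → ℝ) (hcont : ContinuousOn ωB (Icc 0 R)) (hmono : MonotoneOn ωB (Icc 0 R))
    (hnonneg : ∀ v ∈ Icc (0:ℝ) R, 0 ≤ ωB v) (hω0 : ωB 0 = ν)
    (φ : ℝ → ℝ) (hφ : ∀ v, φ v = η + ∫ l in (0:ℝ)..v, ωB l)
    (γstar : ℝ) (hγ : γstar = sSup {γ | γ ∈ Ioc (0:ℝ) R ∧ ωB γ < 1})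
    (hcond : φ γstar ≤ γstar) :
    ∃ vstar ∈ Icc (0:ℝ) R, φ vstar = vstar ∧ vstar ≤ γstar ∧
      ∀ w ∈ Icc (0:ℝ) R, φ w = w → vstar ≤ w := by
  -- φ is continuous on [0,R]
  have huIcc : uIcc (0:ℝ) R = Icc 0 R := uIcc_of_le hR.le
  have hint : MeasureTheory.IntegrableOn ωB (uIcc 0 R) := by
    rw [huIcc]
    exact hcont.integrableOn_compact isCompact_Icc
  have hφcont : ContinuousOn φ (Icc 0 R) := by
    have := (continuousOn_const (c := η)).add (continuousOn_primitive_interval hint)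
    rw [huIcc] at this
    exact this.congr fun x _ => (hφ x)
  -- γstar ∈ (0, R]
  set S : Set ℝ := {γ | γ ∈ Ioc (0:ℝ) R ∧ ωB γ < 1} with hS
  have hbdd : BddAbove S := ⟨R, fun x hx => hx.1.2⟩
  -- S is nonempty: by continuity at 0
  have hSne : S.Nonempty := by
    have h0 : ContinuousWithinAt ωB (Icc 0 R) 0 := hcont 0 ⟨le_refl 0, hR.le⟩
    have htend := h0.tendsto
    rw [hω0] at htend
    have hlt : ∀ᶠ x in nhdsWithin 0 (Icc 0 R), ωB x < 1 :=
      htend.eventually_lt_const hν1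
    rcases (mem_nhdsWithin_iff_exists_mem_nhds_inter.mp (hlt)) with ⟨u, hu, hsub⟩
    rcases Metric.mem_nhds_iff.mp hu with ⟨δ, hδ, hball⟩
    refine ⟨min (δ/2) R, ⟨⟨lt_min (by linarith) hR, min_le_right _ _⟩, ?_⟩⟩
    apply hsub
    constructor
    · apply hball
      simp only [Metric.mem_ball, Real.dist_eq, sub_zero]
      rw [abs_of_nonneg (le_min (by linarith) hR.le)]
      exact lt_of_le_of_lt (min_le_left _ _) (by linarith)
    · exact ⟨le_min (by linarith) hR.le, min_le_right _ _⟩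
  have hγR : γstar ≤ R := by
    rw [hγ]; exact csSup_le hSne fun x hx => hx.1.2
  have hγ0 : 0 < γstar := by
    obtain ⟨x, hx⟩ := hSne
    calc (0:ℝ) < x := hx.1.1
    _ ≤ γstar := hγ ▸ le_csSup hbdd hx
  have hγmem : γstar ∈ Icc (0:ℝ) R := ⟨hγ0.le, hγR⟩
  -- φ 0 = η > 0
  have hφ0 : φ 0 = η := by rw [hφ]; simp
  -- IVT on [0, γstar] for ψ = φ - id : fixed point exists
  have hψcont : ContinuousOn (fun v => φ v - v) (Icc 0 γstar) :=
    (hφcont.mono (Icc_subset_Icc le_rfl hγR)).sub continuousOn_id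
  have hivt := intermediate_value_Icc' (f := fun v => φ v - v) hγ0.le hψcont
  have h0mem : (0:ℝ) ∈ Icc (φ γstar - γstar) (φ 0 - 0) := by
    constructor
    · linarith
    · rw [hφ0]; simp; linarith
  obtain ⟨c, hcmem, hc⟩ := hivt h0mem
  have hcfix : φ c = c := by linarith [sub_eq_zero.mp hc]
  have hcR : c ∈ Icc (0:ℝ) R := ⟨hcmem.1, hcmem.2.trans hγR⟩
  -- set of fixed points is compact nonempty; take its infimum
  set F : Set ℝ := {v ∈ Icc (0:ℝ) R | φ v = v} with hF
  have hFc : c ∈ F := ⟨hcR, hcfix⟩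
  have hFclosed : IsClosed F := by
    have : F = Icc (0:ℝ) R ∩ (fun v => φ v - v) ⁻¹' {0} := by
      ext x
      simp only [hF, Set.mem_setOf_eq, Set.mem_inter_iff, Set.mem_preimage,
        Set.mem_singleton_iff, sub_eq_zero]
    rw [this]
    exact ((hφcont.sub continuousOn_id).preimage_isClosed_of_isClosed isClosed_Icc isClosed_singleton)
  have hFcompact : IsCompact F := isCompact_Icc.of_isClosed_subset hFclosed (fun x hx => hx.1)
  obtain ⟨v, hvF, hvmin⟩ := hFcompact.exists_isMinOn ⟨c, hFc⟩ continuousOn_id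
  refine ⟨v, hvF.1, hvF.2, (hvmin hFc).trans hcmem.2, fun w hw hwfix => hvmin ⟨hw, hwfix⟩⟩
end

section
/- Conversely, with φ as above, if the equation v = φ(v) has a solution in [0,R], then φ(γ_*) ≤ γ_*, where γ_* = sup{γ ∈ (0,R] : ω_B(γ) < 1}. Hence φ(γ_*) ≤ γ_* is a necessary and sufficient condition for existence of a minimal solution of v = φ(v) in [0,R]. -/
open Set Real intervalIntegral

theorem stmt_10 (R η ν : ℝ) (hR : 0 < R) (hη : 0 < η) (hν0 : 0 ≤ ν) (hν1 : ν < 1)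
    (ωB : ℝ → ℝ) (hcont : ContinuousOn ωB (Icc 0 R)) (hmono : MonotoneOn ωB (Icc 0 R))
    (hnonneg : ∀ v ∈ Icc (0:ℝ) R, 0 ≤ ωB v) (hω0 : ωB 0 = ν)
    (φ : ℝ → ℝ) (hφ : ∀ v, φ v = η + ∫ l in (0:ℝ)..v, ωB l)
    (γstar : ℝ) (hγ : γstar = sSup {γ | γ ∈ Ioc (0:ℝ) R ∧ ωB γ < 1}) :
    ((∃ v ∈ Icc (0:ℝ) R, φ v = v) → φ γstar ≤ γstar) ∧
    (φ γstar ≤ γstar ↔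
      ∃ vstar ∈ Icc (0:ℝ) R, φ vstar = vstar ∧
        ∀ w ∈ Icc (0:ℝ) R, φ w = w → vstar ≤ w) := by
  set S : Set ℝ := {γ | γ ∈ Ioc (0:ℝ) R ∧ ωB γ < 1} with hS
  -- S nonempty
  have hSne : S.Nonempty := by
    have hcw : ContinuousWithinAt ωB (Icc 0 R) 0 := hcont 0 ⟨le_refl 0, hR.le⟩
    have hmem : Iio (1:ℝ) ∈ nhds (ωB 0) := by
      rw [hω0]; exact Iio_mem_nhds hν1
    have hev := hcw hmem
    rw [Filter.mem_map, Metric.mem_nhdsWithin_iff] at hev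
    obtain ⟨δ, hδ, hball⟩ := hev
    refine ⟨min (δ/2) R, ⟨⟨lt_min (by linarith) hR, min_le_right _ _⟩, ?_⟩⟩
    have h1 : min (δ/2) R ∈ Metric.ball (0:ℝ) δ := by
      simp only [Metric.mem_ball, Real.dist_eq, sub_zero]
      rw [abs_of_nonneg (le_min (by linarith) hR.le)]
      exact lt_of_le_of_lt (min_le_left _ _) (by linarith)
    exact hball ⟨h1, ⟨le_min (by linarith) hR.le, min_le_right _ _⟩⟩
  have hSbdd : BddAbove S := ⟨R, fun x hx => hx.1.2⟩
  have hγR : γstar ≤ R := by rw [hγ]; exact csSup_le hSne fun x hx => hx.1.2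
  have hγpos : 0 < γstar := by
    obtain ⟨x, hx⟩ := hSne
    have := le_csSup hSbdd hx
    rw [hγ]; exact lt_of_lt_of_le hx.1.1 this
  have hγIcc : γstar ∈ Icc (0:ℝ) R := ⟨hγpos.le, hγR⟩
  -- key facts
  have key1 : ∀ x, 0 < x → x < γstar → ωB x < 1 := by
    intro x hx0 hxγ
    rw [hγ] at hxγ
    obtain ⟨γ, hγS, hxlt⟩ := exists_lt_of_lt_csSup hSne hxγ
    exact lt_of_le_of_lt
      (hmono ⟨hx0.le, le_trans hxlt.le hγS.1.2⟩ ⟨hγS.1.1.le, hγS.1.2⟩ hxlt.le) hγS.2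
  have key2 : ∀ x, γstar < x → x ≤ R → 1 ≤ ωB x := by
    intro x hx hxR
    by_contra h
    push_neg at h
    have : x ∈ S := ⟨⟨lt_trans hγpos hx, hxR⟩, h⟩
    have := le_csSup hSbdd this
    rw [← hγ] at this; linarith
  -- integrability
  have hInt : ∀ a b : ℝ, 0 ≤ a → a ≤ b → b ≤ R → IntervalIntegrable ωB MeasureTheory.volume a b := by
    intro a b ha hab hbR
    apply ContinuousOn.intervalIntegrable
    apply hcont.mono
    rw [uIcc_of_le hab]
    exact Icc_subset_Icc ha hbR
  -- continuity of φ on [0,R]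
  have hφcont : ContinuousOn φ (Icc 0 R) := by
    have h0 : ContinuousOn (fun v => ∫ l in (0:ℝ)..v, ωB l) (Icc 0 R) := by
      have := intervalIntegral.continuousOn_primitive_interval
        (a := (0:ℝ)) (b := R) (f := ωB) (μ := MeasureTheory.volume)
        (by rw [uIcc_of_le hR.le]; exact (hcont.integrableOn_compact isCompact_Icc))
      rwa [uIcc_of_le hR.le] at this
    have : ContinuousOn (fun v => η + ∫ l in (0:ℝ)..v, ωB l) (Icc 0 R) :=
      continuousOn_const.add h0
    exact this.congr fun v _ => hφ v
  have hφ0 : φ 0 = η := by rw [hφ]; simp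
  -- Part 1
  have part1 : (∃ v ∈ Icc (0:ℝ) R, φ v = v) → φ γstar ≤ γstar := by
    rintro ⟨v₀, hv₀, hfix⟩
    rcases le_or_gt v₀ γstar with hle | hlt
    · -- v₀ ≤ γstar : φ γ* = v₀ + ∫_{v₀}^{γ*} ωB ≤ v₀ + (γ* - v₀)
      have hsplit : (∫ l in (0:ℝ)..v₀, ωB l) + (∫ l in v₀..γstar, ωB l)
          = ∫ l in (0:ℝ)..γstar, ωB l :=
        integral_add_adjacent_intervals (hInt 0 v₀ le_rfl hv₀.1 hv₀.2)
          (hInt v₀ γstar hv₀.1 hle hγR)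
      have hbound : (∫ l in v₀..γstar, ωB l) ≤ γstar - v₀ := by
        rw [integral_of_le hle, MeasureTheory.integral_Ioc_eq_integral_Ioo]
        have h1 : (∫ l in Ioo v₀ γstar, ωB l) ≤ ∫ _ in Ioo v₀ γstar, (1:ℝ) := by
          apply MeasureTheory.setIntegral_mono_on
          · exact ((hInt v₀ γstar hv₀.1 hle hγR).1.mono_set Ioo_subset_Ioc_self)
          · exact (MeasureTheory.integrableOn_const_iff (by simp)).2
              (Or.inr (by rw [Real.volume_Ioo]; exact ENNReal.ofReal_lt_top))
          · exact measurableSet_Ioo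
          · intro x hx
            exact (key1 x (lt_of_le_of_lt hv₀.1 hx.1) hx.2).le
        have h2 : (∫ _ in Ioo v₀ γstar, (1:ℝ)) = γstar - v₀ := by
          rw [MeasureTheory.setIntegral_const, Real.volume_real_Ioo_of_le hle, smul_eq_mul, mul_one]
        linarith
      have hφγ : φ γstar = v₀ + ∫ l in v₀..γstar, ωB l := by
        rw [hφ γstar, ← hsplit, ← add_assoc, ← hφ v₀, hfix]
      linarith
    · -- γstar < v₀ : φ γ* = v₀ - ∫_{γ*}^{v₀} ωB ≤ v₀ - (v₀ - γ*)
      have hsplit : (∫ l in (0:ℝ)..γstar, ωB l) + (∫ l in γstar..v₀, ωB l)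
          = ∫ l in (0:ℝ)..v₀, ωB l :=
        integral_add_adjacent_intervals (hInt 0 γstar le_rfl hγpos.le hγR)
          (hInt γstar v₀ hγpos.le hlt.le hv₀.2)
      have hbound : v₀ - γstar ≤ (∫ l in γstar..v₀, ωB l) := by
        rw [integral_of_le hlt.le]
        have h1 : (∫ _ in Ioc γstar v₀, (1:ℝ)) ≤ ∫ l in Ioc γstar v₀, ωB l := by
          apply MeasureTheory.setIntegral_mono_on
          · exact (MeasureTheory.integrableOn_const_iff (by simp)).2
              (Or.inr (by rw [Real.volume_Ioc]; exact ENNReal.ofReal_lt_top))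
          · exact (hInt γstar v₀ hγpos.le hlt.le hv₀.2).1
          · exact measurableSet_Ioc
          · intro x hx
            exact key2 x hx.1 (le_trans hx.2 hv₀.2)
        have h2 : (∫ _ in Ioc γstar v₀, (1:ℝ)) = v₀ - γstar := by
          rw [MeasureTheory.setIntegral_const, Real.volume_real_Ioc_of_le hlt.le, smul_eq_mul, mul_one]
        linarith
      have heq : φ v₀ = φ γstar + ∫ l in γstar..v₀, ωB l := by
        rw [hφ v₀, ← hsplit, ← add_assoc, ← hφ γstar]
      rw [hfix] at heq
      linarith
  refine ⟨part1, ⟨fun hle => ?_, fun ⟨v, hv, hfix, _⟩ => part1 ⟨v, hv, hfix⟩⟩⟩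
  -- existence of minimal fixed point given φ γ* ≤ γ*
  have hsub : Icc (0:ℝ) γstar ⊆ Icc 0 R := Icc_subset_Icc le_rfl hγR
  have hgc : ContinuousOn (fun v => φ v - v) (Icc 0 γstar) :=
    (hφcont.mono hsub).sub continuousOn_id
  have hivt := intermediate_value_Icc' hγpos.le hgc
  have h0mem : (0:ℝ) ∈ Icc (φ γstar - γstar) (φ 0 - 0) := by
    constructor
    · linarith
    · rw [hφ0]; linarith
  obtain ⟨c, hc, hceq⟩ := hivt h0mem
  have hcfix : φ c = c := by dsimp at hceq; linarith
  -- minimal fixed point via infimum of the closed fixed-point set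
  set F : Set ℝ := Icc 0 R ∩ ((fun w => φ w - w) ⁻¹' {0}) with hF
  have hFclosed : IsClosed F :=
    ContinuousOn.preimage_isClosed_of_isClosed (hφcont.sub continuousOn_id)
      isClosed_Icc isClosed_singleton
  have hcF : c ∈ F := ⟨⟨hc.1, le_trans hc.2 hγR⟩, by simp [hcfix]⟩
  have hFne : F.Nonempty := ⟨c, hcF⟩
  have hFbdd : BddBelow F := ⟨0, fun x hx => hx.1.1⟩
  have hmem := hFclosed.csInf_mem hFne hFbdd
  refine ⟨sInf F, hmem.1, ?_, ?_⟩
  · have := hmem.2; simp only [mem_preimage, mem_singleton_iff] at this; linarith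
  · intro w hw hwfix
    exact csInf_le hFbdd ⟨hw, by simp [hwfix]⟩
end

section
/- Let X, Y be Banach spaces, F : D → Y continuously Fréchet differentiable on an open set D ⊆ X, B : Y → X a bounded invertible linear operator, x_0 ∈ D with B̄(x_0, R) ⊆ D. Suppose ‖I - B∘F'(x)‖ ≤ ω_B(‖x - x_0‖) for all x ∈ B̄(x_0,R), where ω_B is continuous non-decreasing with ω_B(0) = ν < 1, and ‖B F(x_0)‖ ≤ η. If φ(v) = η + ∫₀^v ω_B(l) dl satisfies φ(γ_*) ≤ γ_* where γ_* = sup{γ ∈ (0,R] : ω_B(γ) < 1}, then the iteration x_{k+1} = x_k - B F(x_k) is well-defined, stays in B̄(x_0, v_*), and converges to a solution x_* of F(x) = 0 in B̄(x_0, v_*), with ‖x_* - x_k‖ ≤ v_* - v_k where v_k is the majorizing sequence. -/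
open Set Filter Metric intervalIntegral

theorem stmt_12 {X Y : Type*}
    [NormedAddCommGroup X] [NormedSpace ℝ X] [CompleteSpace X]
    [NormedAddCommGroup Y] [NormedSpace ℝ Y] [CompleteSpace Y]
    (D : Set X) (hD : IsOpen D)
    (F : X → Y) (F' : X → X →L[ℝ] Y)
    (hF : ∀ x ∈ D, HasFDerivAt F (F' x) x) (hF'cont : ContinuousOn F' D)
    (B : Y ≃L[ℝ] X)
    (x0 : X) (R : ℝ) (hR : 0 < R) (hball : closedBall x0 R ⊆ D)
    (η ν : ℝ) (hη : 0 < η) (hν0 : 0 ≤ ν) (hν1 : ν < 1)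
    (ωB : ℝ → ℝ) (hcont : ContinuousOn ωB (Icc 0 R)) (hmono : MonotoneOn ωB (Icc 0 R))
    (hω0 : ωB 0 = ν)
    (hbound : ∀ x ∈ closedBall x0 R,
      ‖ContinuousLinearMap.id ℝ X - (B : Y →L[ℝ] X).comp (F' x)‖ ≤ ωB ‖x - x0‖)
    (hBF0 : ‖B (F x0)‖ ≤ η)
    (φ : ℝ → ℝ) (hφ : ∀ v, φ v = η + ∫ l in (0:ℝ)..v, ωB l)
    (γstar : ℝ) (hγ : γstar = sSup {γ | γ ∈ Ioc (0:ℝ) R ∧ ωB γ < 1})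
    (hcond : φ γstar ≤ γstar)
    (v : ℕ → ℝ) (hv0 : v 0 = 0) (hvrec : ∀ k, v (k + 1) = φ (v k))
    (x : ℕ → X) (hx0 : x 0 = x0) (hxrec : ∀ k, x (k + 1) = x k - B (F (x k))) :
    ∃ vstar ∈ Icc (0:ℝ) R, φ vstar = vstar ∧
      (∀ w ∈ Icc (0:ℝ) R, φ w = w → vstar ≤ w) ∧
      (∀ k, x k ∈ closedBall x0 vstar) ∧
      ∃ xstar ∈ closedBall x0 vstar, F xstar = 0 ∧
        Tendsto x atTop (nhds xstar) ∧ ∀ k, ‖xstar - x k‖ ≤ vstar - v k := by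
  -- extend ωB by clamping to [0, R]
  set ω : ℝ → ℝ := fun l => ωB (max 0 (min l R)) with hω_def
  have hclamp_mem : ∀ l : ℝ, max 0 (min l R) ∈ Icc (0:ℝ) R := fun l =>
    ⟨le_max_left _ _, max_le hR.le (min_le_right _ _)⟩
  have hclamp_id : ∀ l ∈ Icc (0:ℝ) R, max 0 (min l R) = l := by
    intro l hl
    rw [min_eq_left hl.2, max_eq_right hl.1]
  have hωeq : ∀ l ∈ Icc (0:ℝ) R, ω l = ωB l := fun l hl => by
    simp only [hω_def, hclamp_id l hl]
  have hωcont : Continuous ω :=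
    hcont.comp_continuous (continuous_const.max (continuous_id.min continuous_const))
      hclamp_mem
  have hωmono : Monotone ω := by
    intro a b hab
    exact hmono (hclamp_mem a) (hclamp_mem b)
      (max_le_max le_rfl (min_le_min hab le_rfl))
  have hωnonneg : ∀ l, 0 ≤ ω l := by
    intro l
    have := hmono (left_mem_Icc.2 hR.le) (hclamp_mem l) (le_max_left _ _)
    rw [hω0] at this
    exact hν0.trans this
  -- primitive Φ
  set Φ : ℝ → ℝ := fun u => ∫ t in (0:ℝ)..u, ω t with hΦ_def
  have hΦderiv : ∀ u, HasDerivAt Φ (ω u) u := fun u =>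
    intervalIntegral.integral_hasDerivAt_right (hωcont.intervalIntegrable _ _)
      hωcont.aestronglyMeasurable.stronglyMeasurableAtFilter hωcont.continuousAt
  have hΦ0 : Φ 0 = 0 := intervalIntegral.integral_same
  have hΦmono : Monotone Φ := by
    intro a b hab
    have h1 : (∫ t in (0:ℝ)..a, ω t) + ∫ t in a..b, ω t = ∫ t in (0:ℝ)..b, ω t :=
      intervalIntegral.integral_add_adjacent_intervals (hωcont.intervalIntegrable _ _)
        (hωcont.intervalIntegrable _ _)
    have h2 : 0 ≤ ∫ t in a..b, ω t :=
      intervalIntegral.integral_nonneg hab fun u _ => hωnonneg u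
    simp only [hΦ_def]
    linarith
  have hφeq : ∀ u ∈ Icc (0:ℝ) R, φ u = η + Φ u := by
    intro u hu
    rw [hφ]
    congr 1
    refine intervalIntegral.integral_congr fun l hl => ?_
    rw [uIcc_of_le hu.1] at hl
    exact (hωeq l ⟨hl.1, hl.2.trans hu.2⟩).symm
  -- γstar ∈ (0, R]
  set S : Set ℝ := {γ | γ ∈ Ioc (0:ℝ) R ∧ ωB γ < 1} with hS_def
  have hSne : S.Nonempty := by
    have hcw : ContinuousWithinAt ωB (Icc 0 R) 0 :=
      hcont 0 (left_mem_Icc.2 hR.le)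
    rw [Metric.continuousWithinAt_iff] at hcw
    obtain ⟨δ, hδ, hδ'⟩ := hcw (1 - ν) (by linarith)
    refine ⟨min (δ/2) R, ⟨⟨lt_min (by linarith) hR, min_le_right _ _⟩, ?_⟩⟩
    have hmem : min (δ/2) R ∈ Icc (0:ℝ) R := ⟨le_min (by linarith) hR.le, min_le_right _ _⟩
    have hd : dist (min (δ/2) R) 0 < δ := by
      rw [Real.dist_eq, sub_zero, abs_of_nonneg hmem.1]
      exact lt_of_le_of_lt (min_le_left _ _) (by linarith)
    have := hδ' hmem hd
    rw [hω0, Real.dist_eq] at this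
    have := abs_lt.1 this
    linarith [this.2]
  have hSbdd : BddAbove S := ⟨R, fun γ hγ' => hγ'.1.2⟩
  obtain ⟨γ₀, hγ₀⟩ := hSne
  have hγpos : 0 < γstar := lt_of_lt_of_le hγ₀.1.1 (hγ ▸ le_csSup hSbdd hγ₀)
  have hγR : γstar ≤ R := hγ ▸ csSup_le ⟨γ₀, hγ₀⟩ fun γ hγ' => hγ'.1.2
  have hγmem : γstar ∈ Icc (0:ℝ) R := ⟨hγpos.le, hγR⟩
  -- properties of v
  have hφγ : η + Φ γstar ≤ γstar := (hφeq γstar hγmem) ▸ hcond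
  have hv : ∀ k, 0 ≤ v k ∧ v k ≤ γstar ∧ v k ≤ v (k + 1) := by
    intro k
    induction k with
    | zero =>
      refine ⟨hv0.ge, hv0 ▸ hγpos.le, ?_⟩
      rw [hv0, hvrec, hv0, hφeq 0 (left_mem_Icc.2 hR.le), hΦ0]
      linarith
    | succ k ih =>
      obtain ⟨h0, h1, h2⟩ := ih
      have hk1 : 0 ≤ v (k + 1) := h0.trans h2
      have hkR : v k ∈ Icc (0:ℝ) R := ⟨h0, h1.trans hγR⟩
      have hle : v (k + 1) ≤ γstar := by
        rw [hvrec, hφeq _ hkR]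
        exact le_trans (by linarith [hΦmono h1]) hφγ
      refine ⟨hk1, hle, ?_⟩
      have e1 : v (k + 1) = η + Φ (v k) := by rw [hvrec, hφeq _ hkR]
      have e2 : v (k + 2) = η + Φ (v (k + 1)) := by
        rw [hvrec, hφeq _ ⟨hk1, hle.trans hγR⟩]
      linarith [hΦmono h2, e1, e2]
  have hvmono : Monotone v := monotone_nat_of_le_succ fun k => (hv k).2.2
  have hbdd : BddAbove (Set.range v) := ⟨γstar, by rintro _ ⟨k, rfl⟩; exact (hv k).2.1⟩
  set vstar : ℝ := ⨆ k, v k with hvstar_def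
  have hvle : ∀ k, v k ≤ vstar := fun k => le_ciSup hbdd k
  have hvstar_le : vstar ≤ γstar := ciSup_le fun k => (hv k).2.1
  have hvstar0 : 0 ≤ vstar := hv0 ▸ hvle 0
  have hvstarR : vstar ≤ R := hvstar_le.trans hγR
  have hvstar_mem : vstar ∈ Icc (0:ℝ) R := ⟨hvstar0, hvstarR⟩
  have hvtendsto : Tendsto v atTop (nhds vstar) := tendsto_atTop_ciSup hvmono hbdd
  -- vstar is a fixed point
  have hfix : φ vstar = vstar := by
    have h1 : Tendsto (fun k => v (k + 1)) atTop (nhds vstar) :=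
      hvtendsto.comp (tendsto_add_atTop_nat 1)
    have h2 : Tendsto (fun k => η + Φ (v k)) atTop (nhds (η + Φ vstar)) :=
      tendsto_const_nhds.add
        (((hΦderiv vstar).continuousAt.tendsto).comp hvtendsto)
    have h3 : (fun k => v (k + 1)) = fun k => η + Φ (v k) := by
      funext k
      rw [hvrec, hφeq _ ⟨(hv k).1, (hv k).2.1.trans hγR⟩]
    rw [h3] at h1
    rw [hφeq _ hvstar_mem]
    exact tendsto_nhds_unique h2 h1
  -- minimality
  have hmin : ∀ w ∈ Icc (0:ℝ) R, φ w = w → vstar ≤ w := by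
    intro w hw hfw
    have : ∀ k, v k ≤ w := by
      intro k
      induction k with
      | zero => rw [hv0]; exact hw.1
      | succ k ih =>
        have e1 : v (k + 1) = η + Φ (v k) := by
          rw [hvrec, hφeq _ ⟨(hv k).1, (hv k).2.1.trans hγR⟩]
        have e2 : φ w = η + Φ w := hφeq _ hw
        linarith [hΦmono ih, e1, e2, hfw]
    exact ciSup_le this
  -- the map T
  set T : X → X := fun y => y - B (F y) with hT_def
  have hTd : ∀ y ∈ closedBall x0 R, HasFDerivAt T
      (ContinuousLinearMap.id ℝ X - (B : Y →L[ℝ] X).comp (F' y)) y := by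
    intro y hy
    exact (hasFDerivAt_id y).sub
      (((B : Y →L[ℝ] X).hasFDerivAt).comp y (hF y (hball hy)))
  -- key induction
  have key : ∀ k, ‖x (k + 1) - x k‖ ≤ v (k + 1) - v k ∧ ‖x k - x0‖ ≤ v k := by
    intro k
    induction k with
    | zero =>
      constructor
      · rw [hxrec, hx0, hv0, hvrec, hv0, hφeq 0 (left_mem_Icc.2 hR.le), hΦ0]
        simpa using hBF0
      · simp [hx0, hv0]
    | succ k ih =>
      obtain ⟨h1, h2⟩ := ih
      have hd0 : 0 ≤ v (k + 1) - v k := by linarith [(hv k).2.2]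
      have h2' : ‖x (k + 1) - x0‖ ≤ v (k + 1) := by
        calc ‖x (k + 1) - x0‖ ≤ ‖x (k + 1) - x k‖ + ‖x k - x0‖ := norm_sub_le_norm_sub_add_norm_sub _ _ _
        _ ≤ (v (k + 1) - v k) + v k := add_le_add h1 h2
        _ = v (k + 1) := by ring
      refine ⟨?_, h2'⟩
      -- MVT along the segment
      set a : ℝ := v k
      set b : ℝ := v (k + 1)
      set d : ℝ := b - a with hd_def
      set Δ : X := x (k + 1) - x k with hΔ_def
      have hΔd : ‖Δ‖ ≤ d := h1
      have hbR : b ≤ R := (hv (k+1)).2.1.trans hγR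
      have ha0 : 0 ≤ a := (hv k).1
      set p : ℝ → X := fun t => x k + t • Δ with hp_def
      have hp_norm : ∀ t ∈ Icc (0:ℝ) 1, ‖p t - x0‖ ≤ a + t * d := by
        intro t ht
        have : p t - x0 = (x k - x0) + t • Δ := by simp only [hp_def]; abel
        rw [this]
        calc ‖(x k - x0) + t • Δ‖ ≤ ‖x k - x0‖ + ‖t • Δ‖ := norm_add_le _ _
        _ ≤ a + t * d := by
            rw [norm_smul, Real.norm_eq_abs, abs_of_nonneg ht.1]
            exact add_le_add h2 (mul_le_mul_of_nonneg_left hΔd ht.1)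
      have hatd : ∀ t ∈ Icc (0:ℝ) 1, a + t * d ≤ R := by
        intro t ht
        have h3 : a + t * d ≤ a + 1 * d :=
          add_le_add_right (mul_le_mul_of_nonneg_right ht.2 hd0) a
        have h4 : a + 1 * d = b := by rw [hd_def]; ring
        linarith
      have hp_ball : ∀ t ∈ Icc (0:ℝ) 1, p t ∈ closedBall x0 R := by
        intro t ht
        rw [mem_closedBall, dist_eq_norm]
        exact (hp_norm t ht).trans (hatd t ht)
      -- derivative of g = T ∘ p
      set g : ℝ → X := fun t => T (p t) with hg_def
      have hp_deriv : ∀ t : ℝ, HasDerivAt p Δ t := by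
        intro t
        have : HasDerivAt (fun s : ℝ => s • Δ) ((1:ℝ) • Δ) t :=
          (hasDerivAt_id t).smul_const Δ
        have h := this.const_add (x k)
        rw [one_smul] at h
        exact h
      have hg_deriv : ∀ t ∈ Icc (0:ℝ) 1, HasDerivAt g
          ((ContinuousLinearMap.id ℝ X - (B : Y →L[ℝ] X).comp (F' (p t))) Δ) t := by
        intro t ht
        exact (hTd (p t) (hp_ball t ht)).comp_hasDerivAt t (hp_deriv t)
      -- bound function
      set ψ : ℝ → ℝ := fun t => Φ (a + t * d) with hψ_def
      have hψ_deriv : ∀ t : ℝ, HasDerivAt ψ (ω (a + t * d) * d) t := by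
        intro t
        have hl : HasDerivAt (fun t : ℝ => a + t * d) d t := by
          simpa using ((hasDerivAt_id t).mul_const d).const_add a
        exact (hΦderiv (a + t * d)).comp t hl
      have hbound' : ∀ t ∈ Ico (0:ℝ) 1,
          ‖(ContinuousLinearMap.id ℝ X - (B : Y →L[ℝ] X).comp (F' (p t))) Δ‖
            ≤ ω (a + t * d) * d := by
        intro t ht
        have ht' : t ∈ Icc (0:ℝ) 1 := Ico_subset_Icc_self ht
        calc ‖(ContinuousLinearMap.id ℝ X - (B : Y →L[ℝ] X).comp (F' (p t))) Δ‖
            ≤ ‖ContinuousLinearMap.id ℝ X - (B : Y →L[ℝ] X).comp (F' (p t))‖ * ‖Δ‖ :=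
              ContinuousLinearMap.le_opNorm _ _
        _ ≤ ω ‖p t - x0‖ * ‖Δ‖ := by
            refine mul_le_mul_of_nonneg_right ?_ (norm_nonneg _)
            rw [hωeq _ ⟨norm_nonneg _, by
              have := (hp_norm t ht').trans (hatd t ht'); exact this⟩]
            exact hbound (p t) (hp_ball t ht')
        _ ≤ ω (a + t * d) * d :=
            mul_le_mul (hωmono (hp_norm t ht')) hΔd (norm_nonneg _) (hωnonneg _)
      -- apply the fencing theorem
      have main : ‖g 1 - g 0‖ ≤ ψ 1 - ψ 0 := by
        have := image_norm_le_of_norm_deriv_right_le_deriv_boundary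
          (f := fun t => g t - g 0)
          (f' := fun t => (ContinuousLinearMap.id ℝ X - (B : Y →L[ℝ] X).comp (F' (p t))) Δ)
          (a := 0) (b := 1)
          (B := fun t => ψ t - ψ 0)
          (B' := fun t => ω (a + t * d) * d)
          (fun t ht => ((hg_deriv t ht).continuousAt.continuousWithinAt).sub
            continuousWithinAt_const)
          (fun t ht => (((hg_deriv t (Ico_subset_Icc_self ht)).sub_const
            (g 0)).hasDerivWithinAt))
          (by simp)
          (fun t => (hψ_deriv t).sub_const (ψ 0))
          hbound'
        simpa using this (right_mem_Icc.2 zero_le_one)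
      have hg1 : g 1 = x (k + 2) := by
        have hp1 : p 1 = x (k + 1) := by simp [hp_def, hΔ_def]
        rw [hg_def]
        simp only [hp1, hT_def]
        rw [hxrec (k + 1)]
      have hg0 : g 0 = x (k + 1) := by
        have hp0 : p 0 = x k := by simp [hp_def]
        rw [hg_def]
        simp only [hp0, hT_def]
        rw [hxrec k]
      have hψ1 : ψ 1 = Φ b := by simp [hψ_def, hd_def]
      have hψ0 : ψ 0 = Φ a := by simp [hψ_def]
      have hrhs : ψ 1 - ψ 0 = v (k + 2) - v (k + 1) := by
        have e1 : v (k + 2) = η + Φ b := by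
          show v (k + 1 + 1) = η + Φ (v (k + 1))
          rw [hvrec, hφeq _ ⟨(hv (k+1)).1, hbR⟩]
        have e2 : b = η + Φ a := by
          show v (k + 1) = η + Φ (v k)
          rw [hvrec, hφeq _ ⟨ha0, (hv k).2.1.trans hγR⟩]
        rw [hψ1, hψ0]
        linarith [e1, e2]
      rw [hg1, hg0, hrhs] at main
      exact main
  -- membership
  have hxball : ∀ k, x k ∈ closedBall x0 vstar := by
    intro k
    rw [mem_closedBall, dist_eq_norm]
    exact ((key k).2).trans (hvle k)
  -- distance between iterates
  have hsum : ∀ n m, n ≤ m → ‖x m - x n‖ ≤ v m - v n := by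
    intro n m hnm
    induction m, hnm using Nat.le_induction with
    | base => simp
    | succ m hnm ih =>
      calc ‖x (m + 1) - x n‖ ≤ ‖x (m + 1) - x m‖ + ‖x m - x n‖ :=
        norm_sub_le_norm_sub_add_norm_sub _ _ _
      _ ≤ (v (m + 1) - v m) + (v m - v n) := add_le_add (key m).1 ih
      _ = v (m + 1) - v n := by ring
  -- Cauchy
  have hcauchy : CauchySeq x := by
    refine cauchySeq_of_le_tendsto_0 (fun N => vstar - v N) ?_ ?_
    · intro n m N hn hm
      rcases le_total n m with h | h
      · rw [dist_eq_norm, norm_sub_rev]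
        calc ‖x m - x n‖ ≤ v m - v n := hsum n m h
        _ ≤ vstar - v N := sub_le_sub (hvle m) (hvmono hn)
      · rw [dist_eq_norm]
        calc ‖x n - x m‖ ≤ v n - v m := hsum m n h
        _ ≤ vstar - v N := sub_le_sub (hvle n) (hvmono hm)
    · have : Tendsto (fun N => vstar - v N) atTop (nhds (vstar - vstar)) :=
        tendsto_const_nhds.sub hvtendsto
      simpa using this
  obtain ⟨xstar, hxstar⟩ := cauchySeq_tendsto_of_complete hcauchy
  -- tail bound
  have htail : ∀ k, ‖xstar - x k‖ ≤ vstar - v k := by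
    intro k
    have h1 : Tendsto (fun m => ‖x m - x k‖) atTop (nhds ‖xstar - x k‖) :=
      ((hxstar.sub_const (x k)).norm)
    refine le_of_tendsto h1 ?_
    filter_upwards [eventually_ge_atTop k] with m hm
    exact (hsum k m hm).trans (sub_le_sub (hvle m) le_rfl)
  have hxstar_mem : xstar ∈ closedBall x0 vstar := by
    rw [mem_closedBall, dist_eq_norm]
    have := htail 0
    rw [hx0, hv0] at this
    simpa using this
  -- F xstar = 0
  have hxstarD : xstar ∈ D := by
    apply hball
    exact closedBall_subset_closedBall hvstarR hxstar_mem
  have hFcont : ContinuousAt F xstar := (hF xstar hxstarD).continuousAt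
  have hFzero : F xstar = 0 := by
    have h1 : Tendsto (fun k => x (k + 1)) atTop (nhds xstar) :=
      hxstar.comp (tendsto_add_atTop_nat 1)
    have h2 : Tendsto (fun k => x k - B (F (x k))) atTop
        (nhds (xstar - B (F xstar))) :=
      hxstar.sub ((B.continuous.continuousAt.tendsto).comp
        ((hFcont.tendsto).comp hxstar))
    have h3 : (fun k => x (k + 1)) = fun k => x k - B (F (x k)) := funext hxrec
    rw [h3] at h1
    have := tendsto_nhds_unique h1 h2
    have hB0 : B (F xstar) = 0 := sub_eq_self.mp this.symm
    apply B.injective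
    rw [map_zero]
    exact hB0
  exact ⟨vstar, hvstar_mem, hfix, hmin, hxball,
    xstar, hxstar_mem, hFzero, hxstar, htail⟩
end

section
/- In the setting of the FSI theorem with Hölder continuous derivative (ω_B(v) = l₀ v^α + ν, α ∈ (0,1], ν ∈ [0,1)), if l₀ η^α ≤ (1-ν)^{α+1}(α/(1+α))^α and R ≥ v_*, then the fixed slope iteration converges to a solution x_* of F(x)=0 with ‖x_* - x_0‖ ≤ v_*, where v_* is the minimal positive root of g(v) = (1+α)^{-1} l₀ v^{α+1} - (1-ν)v + η. -/
open Set Filter Metric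

set_option maxHeartbeats 1000000 in
theorem stmt_13 {X Y : Type*}
    [NormedAddCommGroup X] [NormedSpace ℝ X] [CompleteSpace X]
    [NormedAddCommGroup Y] [NormedSpace ℝ Y] [CompleteSpace Y]
    (D : Set X) (hD : IsOpen D)
    (F : X → Y) (F' : X → X →L[ℝ] Y)
    (hF : ∀ x ∈ D, HasFDerivAt F (F' x) x) (hF'cont : ContinuousOn F' D)
    (B : Y ≃L[ℝ] X)
    (x0 : X) (R : ℝ) (hR : 0 < R) (hball : closedBall x0 R ⊆ D)
    (l0 η α ν : ℝ) (hl0 : 0 < l0) (hη : 0 < η)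
    (hα : α ∈ Ioc (0:ℝ) 1) (hν0 : 0 ≤ ν) (hν1 : ν < 1)
    (hbound : ∀ x ∈ closedBall x0 R,
      ‖ContinuousLinearMap.id ℝ X - (B : Y →L[ℝ] X).comp (F' x)‖ ≤ l0 * ‖x - x0‖ ^ α + ν)
    (hBF0 : ‖B (F x0)‖ ≤ η)
    (g : ℝ → ℝ) (hg : ∀ v, g v = l0 * v ^ (α + 1) / (1 + α) - (1 - ν) * v + η)
    (hcond : l0 * η ^ α ≤ (1 - ν) ^ (α + 1) * (α / (1 + α)) ^ α)
    (vstar : ℝ) (hvpos : 0 < vstar) (hvroot : g vstar = 0)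
    (hvmin : ∀ w, 0 < w → g w = 0 → vstar ≤ w)
    (hRv : vstar ≤ R)
    (x : ℕ → X) (hx0 : x 0 = x0) (hxrec : ∀ k, x (k + 1) = x k - B (F (x k))) :
    ∃ xstar, F xstar = 0 ∧ ‖xstar - x0‖ ≤ vstar ∧ Tendsto x atTop (nhds xstar) := by
  obtain ⟨hα0, hα1⟩ := hα
  have h1α : (0:ℝ) < 1 + α := by linarith
  have h1α' : (1:ℝ) + α ≠ 0 := ne_of_gt h1α
  -- g 0 = η
  have hg0 : g 0 = η := by
    rw [hg 0, Real.zero_rpow (by positivity)]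
    ring
  -- continuity of g
  have hgc : Continuous g := by
    have hrp : Continuous fun v : ℝ => v ^ (α + 1) := by
      rw [continuous_iff_continuousAt]
      intro v
      exact Real.continuousAt_rpow_const v (α + 1) (Or.inr (by positivity))
    have : Continuous fun v : ℝ =>
        l0 * v ^ (α + 1) / (1 + α) - (1 - ν) * v + η :=
      (((continuous_const.mul hrp).div_const (1 + α)).sub
        (continuous_const.mul continuous_id)).add continuous_const
    exact this.congr fun v => (hg v).symm
  -- g is nonnegative on [0, vstar]
  have hgnn : ∀ v, 0 ≤ v → v ≤ vstar → 0 ≤ g v := by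
    intro v hv0 hvv
    by_contra hneg
    push_neg at hneg
    have hv_lt : v ≠ 0 := by
      intro h; rw [h, hg0] at hneg; linarith
    obtain ⟨w, hw, hwz⟩ : ∃ w ∈ Icc 0 v, g w = 0 := by
      have h0 : (0:ℝ) ∈ Icc (g v) (g 0) := by
        constructor <;> [linarith; (rw [hg0]; linarith)]
      have := intermediate_value_Icc' hv0 (hgc.continuousOn) h0
      exact this
    have hw0 : 0 < w := by
      rcases lt_or_eq_of_le hw.1 with h | h
      · exact h
      · exfalso; rw [← h, hg0] at hwz; linarith
    have hvw := hvmin w hw0 hwz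
    have hveq : v = vstar := le_antisymm hvv (le_trans hvw hw.2)
    rw [hveq, hvroot] at hneg
    linarith
  -- monotonicity of v ↦ v + g v on [0, vstar]
  have hmono : ∀ a b : ℝ, 0 ≤ a → a ≤ b → a + g a ≤ b + g b := by
    intro a b ha0 hab
    rw [hg a, hg b]
    have hb0 : 0 ≤ b := le_trans ha0 hab
    have hAB : a ^ (α + 1) ≤ b ^ (α + 1) :=
      Real.rpow_le_rpow ha0 hab (by positivity)
    have h1 : l0 * a ^ (α + 1) / (1 + α) ≤ l0 * b ^ (α + 1) / (1 + α) := by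
      gcongr
    nlinarith [mul_nonneg hν0 (sub_nonneg.2 hab)]
  -- the majorizing scalar sequence
  set t : ℕ → ℝ := fun n => Nat.rec 0 (fun _ s => s + g s) n with ht_def
  have ht0 : t 0 = 0 := rfl
  have htsucc : ∀ k, t (k + 1) = t k + g (t k) := fun k => rfl
  have htb : ∀ k, 0 ≤ t k ∧ t k ≤ vstar := by
    intro k
    induction k with
    | zero => exact ⟨le_refl 0, le_of_lt hvpos⟩
    | succ k ih =>
      have hgk := hgnn (t k) ih.1 ih.2
      constructor
      · rw [htsucc]; linarith
      · rw [htsucc]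
        have := hmono (t k) vstar ih.1 ih.2
        rw [hvroot] at this
        linarith
  have htmono : Monotone t := by
    apply monotone_nat_of_le_succ
    intro k
    rw [htsucc]
    have := hgnn (t k) (htb k).1 (htb k).2
    linarith
  have htstep : ∀ k, t (k + 1) - t k = g (t k) := by
    intro k; rw [htsucc]; ring
  -- the main induction
  have key : ∀ k, ‖x k - x0‖ ≤ t k ∧ ‖x (k + 1) - x k‖ ≤ g (t k) := by
    intro k
    induction k with
    | zero =>
      constructor
      · rw [hx0, sub_self, norm_zero, ht0]
      · rw [ht0, hg0, hxrec 0, hx0]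
        simpa using hBF0
    | succ k ih =>
      obtain ⟨ih1, ih2⟩ := ih
      have hxk1 : ‖x (k + 1) - x0‖ ≤ t (k + 1) := by
        have hsplit : x (k + 1) - x0 = (x (k + 1) - x k) + (x k - x0) := by abel
        calc ‖x (k + 1) - x0‖ ≤ ‖x (k + 1) - x k‖ + ‖x k - x0‖ := by
              rw [hsplit]; exact norm_add_le _ _
          _ ≤ g (t k) + t k := add_le_add ih2 ih1
          _ = t (k + 1) := by rw [htsucc]; ring
      refine ⟨hxk1, ?_⟩
      -- notation
      set a := t k with ha_def
      set e := g (t k) with he_def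
      have ha0 : 0 ≤ a := (htb k).1
      have he0 : 0 ≤ e := hgnn a ha0 (htb k).2
      have haev : a + e ≤ vstar := by
        have := (htb (k + 1)).2; rw [htsucc] at this; exact this
      set Δ := x (k + 1) - x k with hΔ_def
      set y : ℝ → X := fun s => x k + s • Δ with hy_def
      have hynorm : ∀ s ∈ Icc (0:ℝ) 1, ‖y s - x0‖ ≤ a + s * e := by
        intro s hs
        have : y s - x0 = (x k - x0) + s • Δ := by simp [hy_def]; abel
        rw [this]
        calc ‖(x k - x0) + s • Δ‖ ≤ ‖x k - x0‖ + ‖s • Δ‖ := norm_add_le _ _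
          _ ≤ a + s * e := by
              apply add_le_add ih1
              rw [norm_smul, Real.norm_eq_abs, abs_of_nonneg hs.1]
              exact mul_le_mul_of_nonneg_left ih2 hs.1
      have hyball : ∀ s ∈ Icc (0:ℝ) 1, y s ∈ closedBall x0 R := by
        intro s hs
        rw [mem_closedBall_iff_norm]
        calc ‖y s - x0‖ ≤ a + s * e := hynorm s hs
          _ ≤ a + e := by nlinarith [hs.1, hs.2]
          _ ≤ R := le_trans haev hRv
      -- the function f and its derivative
      set f : ℝ → X := fun s => y s - B (F (y s)) - x (k + 1) with hf_def
      set f' : ℝ → X := fun s => Δ - B ((F' (y s)) Δ) with hf'_def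
      have hyd : ∀ s : ℝ, HasDerivAt y Δ s := by
        intro s
        simpa [hy_def] using ((hasDerivAt_id s).smul_const Δ).const_add (x k)
      have hfd : ∀ s ∈ Icc (0:ℝ) 1, HasDerivAt f (f' s) s := by
        intro s hs
        have hmem : y s ∈ D := hball (hyball s hs)
        have h1 : HasDerivAt (fun s => F (y s)) ((F' (y s)) Δ) s :=
          (hF (y s) hmem).comp_hasDerivAt s (hyd s)
        have h2 : HasDerivAt (fun s => B (F (y s))) (B ((F' (y s)) Δ)) s :=
          ((B : Y →L[ℝ] X).hasFDerivAt.comp_hasDerivAt s h1)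
        simpa [hf_def] using ((hyd s).sub h2).sub_const (x (k + 1))
      -- the scalar bound function
      set ψ : ℝ → ℝ := fun s =>
        l0 * ((a + s * e) ^ (α + 1) - a ^ (α + 1)) / (1 + α) + ν * e * s with hψ_def
      set ψ' : ℝ → ℝ := fun s => (l0 * (a + s * e) ^ α + ν) * e with hψ'_def
      have hψd : ∀ s : ℝ, HasDerivAt ψ (ψ' s) s := by
        intro s
        have hlin : HasDerivAt (fun s : ℝ => a + s * e) e s := by
          simpa using ((hasDerivAt_id s).mul_const e).const_add a
        have hrp : HasDerivAt (fun u : ℝ => u ^ (α + 1))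
            ((α + 1) * (a + s * e) ^ (α + 1 - 1)) (a + s * e) :=
          Real.hasDerivAt_rpow_const (Or.inr (by linarith))
        have hcomp : HasDerivAt (fun s : ℝ => (a + s * e) ^ (α + 1))
            ((α + 1) * (a + s * e) ^ (α + 1 - 1) * e) s := by
          have := hrp.comp s hlin; exact this
        have hmain : HasDerivAt ψ
            (l0 * ((α + 1) * (a + s * e) ^ (α + 1 - 1) * e) / (1 + α) + ν * e) s := by
          apply HasDerivAt.add
          · exact ((hcomp.sub_const (a ^ (α + 1))).const_mul l0).div_const (1 + α)
          · simpa using (hasDerivAt_id s).const_mul (ν * e)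
        convert hmain using 1
        have hexp : α + 1 - 1 = α := by ring
        rw [hexp, hψ'_def]
        field_simp
        ring
      have hbnd : ∀ s ∈ Ico (0:ℝ) 1, ‖f' s‖ ≤ ψ' s := by
        intro s hs
        have hs' : s ∈ Icc (0:ℝ) 1 := ⟨hs.1, le_of_lt hs.2⟩
        have hyB := hbound (y s) (hyball s hs')
        have happ : (ContinuousLinearMap.id ℝ X - (B : Y →L[ℝ] X).comp (F' (y s))) Δ
            = f' s := by
          simp [hf'_def]
        have h1 : ‖f' s‖ ≤ ‖ContinuousLinearMap.id ℝ X - (B : Y →L[ℝ] X).comp (F' (y s))‖ * ‖Δ‖ := by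
          rw [← happ]
          exact ContinuousLinearMap.le_opNorm _ Δ
        have h2 : ‖y s - x0‖ ^ α ≤ (a + s * e) ^ α :=
          Real.rpow_le_rpow (norm_nonneg _) (hynorm s hs') (le_of_lt hα0)
        calc ‖f' s‖ ≤ (l0 * ‖y s - x0‖ ^ α + ν) * ‖Δ‖ :=
              le_trans h1 (mul_le_mul_of_nonneg_right hyB (norm_nonneg _))
          _ ≤ (l0 * (a + s * e) ^ α + ν) * e := by
              have hle : l0 * ‖y s - x0‖ ^ α + ν ≤ l0 * (a + s * e) ^ α + ν :=
                add_le_add (mul_le_mul_of_nonneg_left h2 (le_of_lt hl0)) le_rfl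
              have hnn : (0:ℝ) ≤ (a + s * e) ^ α :=
                Real.rpow_nonneg (by nlinarith [hs.1]) α
              have hnn2 : (0:ℝ) ≤ l0 * (a + s * e) ^ α + ν := by positivity
              exact mul_le_mul hle ih2 (norm_nonneg _) hnn2
          _ = ψ' s := rfl
      have hf0 : ‖f 0‖ ≤ ψ 0 := by
        have : f 0 = 0 := by
          simp only [hf_def, hy_def, zero_smul, add_zero, hxrec k]
          abel
        rw [this, norm_zero, hψ_def]
        simp
      have hfc : ContinuousOn f (Icc 0 1) := fun s hs =>
        (hfd s hs).continuousAt.continuousWithinAt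
      have hfd' : ∀ s ∈ Ico (0:ℝ) 1, HasDerivWithinAt f (f' s) (Ici s) s := fun s hs =>
        (hfd s ⟨hs.1, le_of_lt hs.2⟩).hasDerivWithinAt
      have hmvt := image_norm_le_of_norm_deriv_right_le_deriv_boundary hfc hfd' hf0 hψd hbnd
        (right_mem_Icc.2 zero_le_one)
      have harg : y 1 = x (k + 1) := by
        simp only [hy_def, one_smul, hΔ_def]
        abel
      have hf1 : f 1 = x (k + 2) - x (k + 1) := by
        show y 1 - B (F (y 1)) - x (k + 1) = x (k + 2) - x (k + 1)
        rw [harg, hxrec (k + 1)]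
      have hψ1 : ψ 1 = g (t (k + 1)) := by
        have hge : e = l0 * a ^ (α + 1) / (1 + α) - (1 - ν) * a + η := by
          rw [he_def, hg a]
        have hgae : g (a + e) = l0 * (a + e) ^ (α + 1) / (1 + α) - (1 - ν) * (a + e) + η :=
          hg (a + e)
        have htk1 : t (k + 1) = a + e := htsucc k
        rw [htk1, hgae, hψ_def]
        have expand : l0 * ((a + 1 * e) ^ (α + 1) - a ^ (α + 1)) / (1 + α)
            = l0 * (a + e) ^ (α + 1) / (1 + α) - l0 * a ^ (α + 1) / (1 + α) := by
          rw [one_mul]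
          field_simp
        simp only [expand]
        linarith
      have := hmvt
      rw [hf1] at this
      rw [← hψ1]
      exact this
  -- limit of scalar sequence
  have hbdd : BddAbove (Set.range t) := by
    refine ⟨vstar, ?_⟩
    rintro _ ⟨k, rfl⟩
    exact (htb k).2
  set L := ⨆ k, t k with hL_def
  have htL : Tendsto t atTop (nhds L) := tendsto_atTop_ciSup htmono hbdd
  have htleL : ∀ k, t k ≤ L := fun k => le_ciSup hbdd k
  have hLv : L ≤ vstar := ciSup_le fun k => (htb k).2
  -- x is Cauchy
  have hxdiff : ∀ m n : ℕ, m ≤ n → ‖x n - x m‖ ≤ t n - t m := by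
    intro m n hmn
    induction n with
    | zero =>
      have : m = 0 := Nat.le_zero.1 hmn
      simp [this]
    | succ n ih =>
      rcases Nat.lt_or_ge m (n + 1) with h | h
      · have hmn' : m ≤ n := Nat.lt_succ_iff.1 h
        calc ‖x (n + 1) - x m‖ ≤ ‖x (n + 1) - x n‖ + ‖x n - x m‖ := by
              have := norm_add_le (x (n + 1) - x n) (x n - x m)
              simpa using this
          _ ≤ g (t n) + (t n - t m) := add_le_add (key n).2 (ih hmn')
          _ = t (n + 1) - t m := by rw [htsucc]; ring
      · have : m = n + 1 := le_antisymm hmn h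
        simp [this]
  have hcauchy : CauchySeq x := by
    apply cauchySeq_of_le_tendsto_0 (fun N => L - t N)
    · intro n m N hn hm
      rcases le_total m n with h | h
      · calc dist (x n) (x m) = ‖x n - x m‖ := by rw [dist_eq_norm]
          _ ≤ t n - t m := hxdiff m n h
          _ ≤ L - t N := by
              have := htleL n
              have := htmono hm
              linarith [htleL n, htmono hm]
      · calc dist (x n) (x m) = ‖x m - x n‖ := by rw [dist_comm, dist_eq_norm]
          _ ≤ t m - t n := hxdiff n m h
          _ ≤ L - t N := by linarith [htleL m, htmono hn]
    · have : Tendsto (fun N => L - t N) atTop (nhds (L - L)) :=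
        tendsto_const_nhds.sub htL
      simpa using this
  obtain ⟨xstar, hxs⟩ := cauchySeq_tendsto_of_complete hcauchy
  refine ⟨xstar, ?_, ?_, hxs⟩
  · -- F xstar = 0
    have hxsb : ‖xstar - x0‖ ≤ vstar := by
      have h1 : Tendsto (fun k => ‖x k - x0‖) atTop (nhds ‖xstar - x0‖) :=
        ((hxs.sub tendsto_const_nhds).norm)
      apply le_of_tendsto h1
      filter_upwards with k
      exact le_trans (key k).1 (htb k).2
    have hxsD : xstar ∈ D := hball (by
      rw [mem_closedBall_iff_norm]; exact le_trans hxsb hRv)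
    have hFc : ContinuousAt F xstar := (hF xstar hxsD).differentiableAt.continuousAt
    have h1 : Tendsto (fun k => x (k + 1)) atTop (nhds xstar) :=
      hxs.comp (tendsto_add_atTop_nat 1)
    have h2a : Tendsto (fun k => F (x k)) atTop (nhds (F xstar)) := hFc.tendsto.comp hxs
    have h2b : Tendsto (fun k => B (F (x k))) atTop (nhds (B (F xstar))) :=
      (B.continuous.tendsto (F xstar)).comp h2a
    have h2 : Tendsto (fun k => x k - B (F (x k))) atTop (nhds (xstar - B (F xstar))) :=
      hxs.sub h2b
    have h3 : Tendsto (fun k => x (k + 1)) atTop (nhds (xstar - B (F xstar))) := by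
      apply h2.congr
      intro k
      exact (hxrec k).symm
    have heq : xstar = xstar - B (F xstar) := tendsto_nhds_unique h1 h3
    have hBz : B (F xstar) = 0 := by
      have h4 : B (F xstar) = xstar - (xstar - B (F xstar)) := by abel
      rw [h4, ← heq, sub_self]
    have : F xstar = B.symm (B (F xstar)) := (B.symm_apply_apply _).symm
    rw [this, hBz, map_zero]
  · -- ‖xstar - x0‖ ≤ vstar
    have h1 : Tendsto (fun k => ‖x k - x0‖) atTop (nhds ‖xstar - x0‖) :=
      ((hxs.sub tendsto_const_nhds).norm)
    apply le_of_tendsto h1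
    filter_upwards with k
    exact le_trans (key k).1 (htb k).2
end

section
/- In the Hölder setting with strict inequality l₀ η^α < (1-ν)^{α+1}(α/(1+α))^α and R ≥ v_{**}, the solution x_* of F(x) = 0 is unique in the open ball B(x_0, v_{**}), where v_{**} is the maximal root of g(v) = (1+α)^{-1} l₀ v^{α+1} - (1-ν)v + η on [0,R]. -/
open Set Filter Metric
open Topology

lemma seg_aux {X Y : Type*} [NormedAddCommGroup X] [NormedSpace ℝ X]
    [NormedAddCommGroup Y] [NormedSpace ℝ Y]
    (D : Set X) (F : X → Y) (F' : X → X →L[ℝ] Y)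
    (hF : ∀ x ∈ D, HasFDerivAt F (F' x) x)
    (Bc : Y →L[ℝ] X) (x0 : X) (R l0 α ν : ℝ) (hl0 : 0 < l0) (hα0 : 0 < α)
    (hball : closedBall x0 R ⊆ D)
    (hbound : ∀ x ∈ closedBall x0 R,
      ‖ContinuousLinearMap.id ℝ X - Bc.comp (F' x)‖ ≤ l0 * ‖x - x0‖ ^ α + ν)
    (u w : X) (hu : u ∈ closedBall x0 R) (hw : w ∈ closedBall x0 R)
    (hlt : ‖w - x0‖ < ‖u - x0‖) :
    ‖(u - Bc (F u)) - (w - Bc (F w))‖ ≤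
      (ν + l0 * (‖u - x0‖ ^ (α+1) - ‖w - x0‖ ^ (α+1)) /
        ((α+1) * (‖u - x0‖ - ‖w - x0‖))) * ‖u - w‖ := by
  set a := ‖u - x0‖ with hadef
  set b := ‖w - x0‖ with hbdef
  have hb0 : (0:ℝ) ≤ b := norm_nonneg _
  have ha0 : (0:ℝ) ≤ a := le_trans hb0 hlt.le
  have hab : (0:ℝ) < a - b := sub_pos.2 hlt
  have hα1 : (1:ℝ) ≤ α + 1 := by linarith
  have hαpos : (0:ℝ) < α + 1 := by linarith
  set P : X → X := fun z => z - Bc (F z) with hPdef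
  set γ : ℝ → X := fun t => w + t • (u - w) with hγdef
  set r : ℝ → ℝ := fun t => b + t * (a - b) with hrdef
  have hmem : ∀ t ∈ Icc (0:ℝ) 1, γ t ∈ closedBall x0 R ∧ ‖γ t - x0‖ ≤ r t := by
    intro t ht
    have h1 : γ t - x0 = (1-t) • (w - x0) + t • (u - x0) := by
      simp only [hγdef]; module
    have h2 : ‖γ t - x0‖ ≤ (1-t)*b + t*a := by
      rw [h1]
      calc ‖(1-t) • (w - x0) + t • (u - x0)‖
          ≤ ‖(1-t) • (w - x0)‖ + ‖t • (u - x0)‖ := norm_add_le _ _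
        _ = (1-t)*b + t*a := by
            rw [norm_smul, norm_smul, Real.norm_eq_abs, Real.norm_eq_abs,
              abs_of_nonneg (by linarith [ht.2]), abs_of_nonneg ht.1]
    refine ⟨?_, ?_⟩
    · rw [mem_closedBall_iff_norm]
      refine h2.trans ?_
      have hbR : b ≤ R := mem_closedBall_iff_norm.1 hw
      have haR : a ≤ R := mem_closedBall_iff_norm.1 hu
      nlinarith [ht.1, ht.2]
    · refine h2.trans_eq ?_
      simp only [hrdef]; ring
  have hγd : ∀ t : ℝ, HasDerivAt γ (u - w) t := by
    intro t
    simpa [hγdef] using ((hasDerivAt_id t).smul_const (u - w)).const_add w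
  set f : ℝ → X := fun t => P (γ t) - P w with hfdef
  set f' : ℝ → X := fun t => (ContinuousLinearMap.id ℝ X - Bc.comp (F' (γ t))) (u - w)
    with hf'def
  have hfd : ∀ t ∈ Icc (0:ℝ) 1, HasDerivAt f (f' t) t := by
    intro t ht
    have hzD : γ t ∈ D := hball (hmem t ht).1
    have hP : HasFDerivAt P (ContinuousLinearMap.id ℝ X - Bc.comp (F' (γ t))) (γ t) := by
      exact (hasFDerivAt_id (γ t)).sub ((Bc.hasFDerivAt).comp (γ t) (hF _ hzD))
    have h := hP.comp_hasDerivAt t (hγd t)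
    simpa [hfdef, hf'def, Function.comp] using h.sub_const (P w)
  set n := ‖u - w‖ with hndef
  set c := (α+1)*(a-b) with hcdef
  have hc0 : c ≠ 0 := by positivity
  set Bf : ℝ → ℝ := fun t => (ν * t + l0 * ((r t ^ (α+1) - b ^ (α+1)) / c)) * n with hBfdef
  set Bf' : ℝ → ℝ := fun t => (ν + l0 * r t ^ α) * n with hBf'def
  have hBd : ∀ t : ℝ, HasDerivAt Bf (Bf' t) t := by
    intro t
    have hr : HasDerivAt r (a - b) t := by
      simpa [hrdef] using ((hasDerivAt_id t).mul_const (a - b)).const_add b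
    have hpow : HasDerivAt (fun s : ℝ => s ^ (α+1)) ((α+1) * r t ^ α) (r t) := by
      simpa using Real.hasDerivAt_rpow_const (x := r t) (p := α+1) (Or.inr hα1)
    have h1 : HasDerivAt (fun t => r t ^ (α+1)) ((α+1) * r t ^ α * (a-b)) t := hpow.comp t hr
    have h2 := (((hasDerivAt_id t).const_mul ν).add
      (((h1.sub_const (b^(α+1))).div_const c).const_mul l0)).mul_const n
    refine h2.congr_deriv ?_
    simp only [hBf'def, hcdef]
    field_simp
  have hbnd : ∀ t ∈ Ico (0:ℝ) 1, ‖f' t‖ ≤ Bf' t := by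
    intro t ht
    have htI : t ∈ Icc (0:ℝ) 1 := Ico_subset_Icc_self ht
    obtain ⟨hmem1, hmem2⟩ := hmem t htI
    have hL : ‖ContinuousLinearMap.id ℝ X - Bc.comp (F' (γ t))‖ ≤ l0 * ‖γ t - x0‖ ^ α + ν :=
      hbound _ hmem1
    have h1 : ‖f' t‖ ≤ (l0 * ‖γ t - x0‖ ^ α + ν) * n := by
      refine le_trans (ContinuousLinearMap.le_opNorm _ _) ?_
      exact mul_le_mul_of_nonneg_right hL (norm_nonneg _)
    refine h1.trans ?_
    have h2 : ‖γ t - x0‖ ^ α ≤ r t ^ α := Real.rpow_le_rpow (norm_nonneg _) hmem2 hα0.le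
    have h3 : l0 * ‖γ t - x0‖ ^ α + ν ≤ ν + l0 * r t ^ α := by nlinarith
    exact mul_le_mul_of_nonneg_right h3 (norm_nonneg _)
  have hγ0 : γ 0 = w := by simp [hγdef]
  have hγ1 : γ 1 = u := by simp [hγdef]
  have hr1 : r 1 = a := by simp [hrdef]
  have hf0 : ‖f 0‖ ≤ Bf 0 := by
    simp [hfdef, hγ0, hBfdef, hrdef]
  have hfc : ContinuousOn f (Icc 0 1) := fun t ht => ((hfd t ht).continuousAt).continuousWithinAt
  have key := image_norm_le_of_norm_deriv_right_le_deriv_boundary hfc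
      (fun t ht => (hfd t (Ico_subset_Icc_self ht)).hasDerivWithinAt) hf0 hBd hbnd
      (right_mem_Icc.2 zero_le_one)
  have hf1 : f 1 = (u - Bc (F u)) - (w - Bc (F w)) := by simp [hfdef, hγ1, hPdef]
  rw [hf1] at key
  refine key.trans_eq ?_
  simp only [hBfdef, hr1, hcdef]
  ring

set_option maxHeartbeats 1000000 in
theorem stmt_14 {X Y : Type*}
    [NormedAddCommGroup X] [NormedSpace ℝ X] [CompleteSpace X]
    [NormedAddCommGroup Y] [NormedSpace ℝ Y] [CompleteSpace Y]
    (D : Set X) (hD : IsOpen D)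
    (F : X → Y) (F' : X → X →L[ℝ] Y)
    (hF : ∀ x ∈ D, HasFDerivAt F (F' x) x) (hF'cont : ContinuousOn F' D)
    (B : Y ≃L[ℝ] X)
    (x0 : X) (R : ℝ) (hR : 0 < R) (hball : closedBall x0 R ⊆ D)
    (l0 η α ν : ℝ) (hl0 : 0 < l0) (hη : 0 < η)
    (hα : α ∈ Ioc (0:ℝ) 1) (hν0 : 0 ≤ ν) (hν1 : ν < 1)
    (hbound : ∀ x ∈ closedBall x0 R,
      ‖ContinuousLinearMap.id ℝ X - (B : Y →L[ℝ] X).comp (F' x)‖ ≤ l0 * ‖x - x0‖ ^ α + ν)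
    (hBF0 : ‖B (F x0)‖ ≤ η)
    (g : ℝ → ℝ) (hg : ∀ v, g v = l0 * v ^ (α + 1) / (1 + α) - (1 - ν) * v + η)
    (hcond : l0 * η ^ α < (1 - ν) ^ (α + 1) * (α / (1 + α)) ^ α)
    (vss : ℝ) (hvss : vss ∈ Icc (0:ℝ) R) (hvroot : g vss = 0)
    (hvmax : ∀ w ∈ Icc (0:ℝ) R, g w = 0 → w ≤ vss)
    (hRv : vss ≤ R) :
    ∀ x ∈ ball x0 vss, ∀ y ∈ ball x0 vss, F x = 0 → F y = 0 → x = y := by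
  obtain ⟨hα0, hα1'⟩ := hα
  intro x hx y hy hFx hFy
  set Bc : Y →L[ℝ] X := (B : Y →L[ℝ] X) with hBcdef
  obtain ⟨P, hPdef⟩ : ∃ P : X → X, ∀ ζ, P ζ = ζ - Bc (F ζ) := ⟨_, fun _ => rfl⟩
  have hPfun : P = fun ζ => ζ - Bc (F ζ) := funext hPdef
  have hPP : ∀ u w : X, (u - Bc (F u)) - (w - Bc (F w)) = P u - P w := by
    intro u w; rw [hPdef, hPdef]
  have hν' : (0:ℝ) < 1 - ν := by linarith
  have hα1 : (1:ℝ) < α + 1 := by linarith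
  have hvss0 : (0:ℝ) ≤ vss := hvss.1
  -- continuity of g
  have hgc : Continuous g := by
    have h1 : Continuous fun v : ℝ => v ^ (α+1) :=
      continuous_iff_continuousAt.2 fun v =>
        Real.continuousAt_rpow_const v _ (Or.inr (by linarith))
    have : Continuous fun v : ℝ => l0 * v ^ (α + 1) / (1 + α) - (1 - ν) * v + η := by
      exact (((continuous_const.mul h1).div_const _).sub
        (continuous_const.mul continuous_id)).add continuous_const
    convert this using 1
    funext v; exact hg v
  -- minimal root vs of g on [0, vss]
  set S : Set ℝ := Icc 0 vss ∩ {v | g v = 0} with hSdef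
  have hSne : vss ∈ S := ⟨⟨hvss0, le_refl _⟩, hvroot⟩
  have hSbdd : BddBelow S := ⟨0, fun v hv => hv.1.1⟩
  have hSclosed : IsClosed S := isClosed_Icc.inter (isClosed_eq hgc continuous_const)
  obtain ⟨vs, hvsS, hvslb⟩ : ∃ vs ∈ S, ∀ c ∈ S, vs ≤ c :=
    ⟨sInf S, hSclosed.csInf_mem ⟨_, hSne⟩ hSbdd, fun c hc => csInf_le hSbdd hc⟩
  have hvs0 : (0:ℝ) ≤ vs := hvsS.1.1
  have hvsvss : vs ≤ vss := hvsS.1.2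
  have hgvs : g vs = 0 := hvsS.2
  have hvsR : vs ≤ R := hvsvss.trans hRv
  have hg0 : g 0 = η := by
    rw [hg]; rw [Real.zero_rpow (by positivity)]; ring
  have hgpos : ∀ t, 0 ≤ t → t < vs → 0 < g t := by
    intro t ht0 htvs
    by_contra hcon
    push_neg at hcon
    have h0mem : (0:ℝ) ∈ Icc (g t) (g 0) := ⟨hcon, by rw [hg0]; exact hη.le⟩
    obtain ⟨c, hc1, hc2⟩ := intermediate_value_Icc' ht0 hgc.continuousOn h0mem
    have hcS : c ∈ S := ⟨⟨hc1.1, by linarith [hc1.2, hvsvss]⟩, hc2⟩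
    have := hvslb c hcS
    linarith [hc1.2]
  -- the minimizer vm
  set vm := ((1-ν)/l0) ^ α⁻¹ with hvmdef
  have hvm0 : 0 < vm := Real.rpow_pos_of_pos (by positivity) _
  have hvmα : vm ^ α = (1-ν)/l0 := by
    rw [hvmdef, ← Real.rpow_mul (by positivity), inv_mul_cancel₀ (ne_of_gt hα0), Real.rpow_one]
  have h1ν : (1-ν)^(α+1) = (1-ν)^α * (1-ν) := by
    rw [Real.rpow_add hν', Real.rpow_one]
  have hηvm : η < α/(1+α) * ((1-ν) * vm) := by
    set cξ := α/(1+α) * ((1-ν)*vm) with hcξ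
    have hc0 : 0 < cξ := by positivity
    by_contra hle
    push_neg at hle
    have h1 : cξ ^ α ≤ η ^ α := Real.rpow_le_rpow hc0.le hle hα0.le
    have h2 : cξ ^ α = (α/(1+α))^α * ((1-ν)^α * vm^α) := by
      rw [hcξ, Real.mul_rpow (by positivity) (by positivity),
        Real.mul_rpow (by positivity) hvm0.le]
    rw [hvmα] at h2
    have h4 : l0 * cξ^α = (1-ν)^(α+1)*(α/(1+α))^α := by
      rw [h2, h1ν]; field_simp
    have h5 : l0 * cξ^α ≤ l0 * η^α := mul_le_mul_of_nonneg_left h1 hl0.le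
    linarith
  have hgvm : g vm < 0 := by
    rw [hg]
    have h5 : vm ^ (α+1) = vm^α * vm := by rw [Real.rpow_add hvm0, Real.rpow_one]
    rw [h5, hvmα]
    have h6 : l0 * ((1-ν)/l0*vm)/(1+α) = (1-ν)*vm/(1+α) := by field_simp
    rw [h6]
    have h7 : (1-ν)*vm - (1-ν)*vm/(1+α) = α/(1+α)*((1-ν)*vm) := by field_simp; ring
    linarith
  have hvsvm : vs < vm := by
    rcases lt_trichotomy vs vm with h|h|h
    · exact h
    · exfalso; rw [← h] at hgvm; linarith
    · exact absurd (hgpos vm hvm0.le h) (by linarith)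
  have hq1 : l0 * vs ^ α < 1 - ν := by
    have h := Real.rpow_lt_rpow hvs0 hvsvm hα0
    rw [hvmα] at h
    have h2 : l0 * vs^α < l0 * ((1-ν)/l0) := by nlinarith
    calc l0 * vs^α < l0 * ((1-ν)/l0) := h2
      _ = 1 - ν := by field_simp
  -- iteration
  obtain ⟨z, hz0, hzs⟩ : ∃ z : ℕ → X, z 0 = x0 ∧ ∀ n, z (n+1) = P (z n) :=
    ⟨fun n => P^[n] x0, rfl, fun n => Function.iterate_succ_apply' P n x0⟩
  have hgvs' := hgvs
  rw [hg] at hgvs'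
  have hηvs : η ≤ vs := by
    have h1 : 0 ≤ l0 * vs^(α+1)/(1+α) := by positivity
    linarith [mul_nonneg hν0 hvs0, hgvs']
  have hx0R : x0 ∈ closedBall x0 R := mem_closedBall_self hR.le
  have hPx0 : ‖P x0 - x0‖ ≤ η := by
    have h : P x0 - x0 = -(Bc (F x0)) := by rw [hPdef]; abel
    rw [h, norm_neg]
    exact hBF0
  have hinv : ∀ n, ‖z n - x0‖ ≤ vs := by
    intro n
    induction n with
    | zero => simpa [hz0] using hvs0
    | succ n ih =>
      rw [hzs n]
      by_cases hzx : z n = x0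
      · rw [hzx]
        calc ‖P x0 - x0‖ ≤ η := hPx0
          _ ≤ vs := hηvs
      · set bn := ‖z n - x0‖ with hbn
        have hbn0 : 0 < bn := norm_sub_pos_iff.2 hzx
        have hmemz : z n ∈ closedBall x0 R := mem_closedBall_iff_norm.2 (ih.trans hvsR)
        have hseg := seg_aux D F F' hF Bc x0 R l0 α ν hl0 hα0 hball hbound (z n) x0 hmemz
          hx0R (by simp only [sub_self, norm_zero]; exact hbn0)
        rw [sub_self, norm_zero, Real.zero_rpow (by positivity), sub_zero, sub_zero,
          hPP] at hseg
        have hstep : ‖P (z n) - P x0‖ ≤ (ν + l0 * bn^(α+1) / ((α+1)*bn)) * bn := hseg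
        have hbpow : bn^(α+1) ≤ vs^(α+1) := Real.rpow_le_rpow hbn0.le ih (by linarith)
        calc ‖P (z n) - x0‖ = ‖(P (z n) - P x0) + (P x0 - x0)‖ := by abel_nf
          _ ≤ ‖P (z n) - P x0‖ + ‖P x0 - x0‖ := norm_add_le _ _
          _ ≤ (ν + l0 * bn^(α+1) / ((α+1)*bn)) * bn + η := add_le_add hstep hPx0
          _ = η + ν*bn + l0*bn^(α+1)/(1+α) := by field_simp; ring
          _ ≤ η + ν*vs + l0*vs^(α+1)/(1+α) := by
              have hνb : ν*bn ≤ ν*vs := mul_le_mul_of_nonneg_left ih hν0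
              have hdd : l0*bn^(α+1)/(1+α) ≤ l0*vs^(α+1)/(1+α) :=
                (div_le_div_iff_of_pos_right (by linarith : (0:ℝ) < 1+α)).2
                  (mul_le_mul_of_nonneg_left hbpow hl0.le)
              linarith
          _ = vs := by linarith [hgvs']
  -- contraction towards a zero
  have hconv : ∀ p : X, p ∈ ball x0 vss → F p = 0 → Tendsto z atTop (𝓝 p) := by
    intro p hp hFp
    set a := ‖p - x0‖ with hadef
    have hpa : a < vss := mem_ball_iff_norm.1 hp
    have hpR : p ∈ closedBall x0 R := mem_closedBall_iff_norm.2 (by linarith)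
    have hPp : P p = p := by rw [hPdef, hFp]; simp
    obtain ⟨q, hq0, hq1', hqstep⟩ :
        ∃ q, 0 ≤ q ∧ q < 1 ∧ ∀ n, ‖p - z (n+1)‖ ≤ q * ‖p - z n‖ := by
      by_cases hcase : a ≤ vs
      · refine ⟨ν + l0 * vs^α, by positivity, by linarith, ?_⟩
        intro n
        rw [hzs n]
        have hconvx : Convex ℝ (closedBall x0 vs) := convex_closedBall _ _
        have hsubR : closedBall x0 vs ⊆ closedBall x0 R := closedBall_subset_closedBall hvsR
        have hder : ∀ ξ ∈ closedBall x0 vs,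
            HasFDerivWithinAt P (ContinuousLinearMap.id ℝ X - Bc.comp (F' ξ))
              (closedBall x0 vs) ξ := by
          rw [hPfun]
          intro ξ hξ
          have := (hasFDerivAt_id ξ).sub ((Bc.hasFDerivAt).comp ξ (hF _ (hball (hsubR hξ))))
          exact this.hasFDerivWithinAt
        have hbd : ∀ ξ ∈ closedBall x0 vs,
            ‖ContinuousLinearMap.id ℝ X - Bc.comp (F' ξ)‖ ≤ ν + l0 * vs^α := by
          intro ξ hξ
          refine (hbound ξ (hsubR hξ)).trans ?_
          have h2 : ‖ξ - x0‖^α ≤ vs^α :=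
            Real.rpow_le_rpow (norm_nonneg _) (mem_closedBall_iff_norm.1 hξ) hα0.le
          nlinarith
        have hmemp : p ∈ closedBall x0 vs := mem_closedBall_iff_norm.2 hcase
        have hmemz : z n ∈ closedBall x0 vs := mem_closedBall_iff_norm.2 (hinv n)
        have hmvt := hconvx.norm_image_sub_le_of_norm_hasFDerivWithin_le hder hbd hmemz hmemp
        rw [hPp] at hmvt
        exact hmvt
      · push_neg at hcase
        have hΔ : vs^(α+1) ≤ a^(α+1) := Real.rpow_le_rpow hvs0 hcase.le (by linarith)
        have havs : 0 < a - vs := by linarith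
        refine ⟨ν + l0 * (a^(α+1) - vs^(α+1)) / ((α+1)*(a - vs)), ?_, ?_, ?_⟩
        · have h0 : 0 ≤ l0 * (a^(α+1) - vs^(α+1)) / ((α+1)*(a - vs)) :=
            div_nonneg (mul_nonneg hl0.le (sub_nonneg.2 hΔ))
              (mul_nonneg (by linarith) havs.le)
          linarith
        · -- q < 1 via g a < 0
          have hga : g a < 0 := by
            have hvsvss' : vs < vss := lt_of_lt_of_le hcase hpa.le
            set s := (a - vs)/(vss - vs) with hsdef
            have hs0 : 0 < s := div_pos havs (by linarith)
            have hs1 : s < 1 := by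
              rw [hsdef, div_lt_one (by linarith)]; linarith
            have hmulc : s * (vss - vs) = a - vs := by
              rw [hsdef]; exact div_mul_cancel₀ _ (by linarith)
            have hcomb : (1-s)*vs + s*vss = a := by linarith [hmulc]
            have hsc := (strictConvexOn_rpow hα1).2 (mem_Ici.2 hvs0) (mem_Ici.2 hvss0)
              (by intro hcon; rw [hcon] at hvsvss'; exact lt_irrefl _ hvsvss')
              (by linarith : (0:ℝ) < 1 - s) hs0 (by ring)
            simp only [smul_eq_mul] at hsc
            rw [hcomb] at hsc
            have hgss' := hvroot
            rw [hg] at hgss' ⊢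
            have h1 : l0 * a^(α+1)/(1+α) <
                (1-s)*(l0*vs^(α+1)/(1+α)) + s*(l0*vss^(α+1)/(1+α)) := by
              have hden : (0:ℝ) < 1 + α := by linarith
              rw [div_lt_iff₀ hden]
              have := mul_lt_mul_of_pos_left hsc hl0
              calc l0 * a^(α+1) < l0*((1-s)*vs^(α+1) + s*vss^(α+1)) := this
                _ = ((1-s)*(l0*vs^(α+1)/(1+α)) + s*(l0*vss^(α+1)/(1+α)))*(1+α) := by
                    field_simp
            have e1 : (1-s)*(l0*vs^(α+1)/(1+α)) = (1-s)*((1-ν)*vs - η) := by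
              rw [show l0*vs^(α+1)/(1+α) = (1-ν)*vs - η from by linarith [hgvs']]
            have e2 : s*(l0*vss^(α+1)/(1+α)) = s*((1-ν)*vss - η) := by
              rw [show l0*vss^(α+1)/(1+α) = (1-ν)*vss - η from by linarith [hgss']]
            have e3 : (1-s)*((1-ν)*vs - η) + s*((1-ν)*vss - η)
                = (1-ν)*((1-s)*vs + s*vss) - η := by ring
            rw [hcomb] at e3
            linarith [h1, e1, e2, e3]
          have hgvs2 := hgvs'
          rw [hg] at hga
          have hΔlt : l0*(a^(α+1)-vs^(α+1))/(1+α) < (1-ν)*(a-vs) := by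
            have e : l0*(a^(α+1)-vs^(α+1))/(1+α)
                = l0*a^(α+1)/(1+α) - l0*vs^(α+1)/(1+α) := by ring
            linarith [hga, hgvs2, e]
          have e2 : l0*(a^(α+1)-vs^(α+1))/((α+1)*(a-vs))
              = (l0*(a^(α+1)-vs^(α+1))/(1+α))/(a-vs) := by
            rw [div_div, show (1+α)*(a-vs) = (α+1)*(a-vs) from by ring]
          have hlt1 : l0 * (a^(α+1) - vs^(α+1)) / ((α+1)*(a - vs)) < 1 - ν := by
            rw [e2, div_lt_iff₀ havs]
            exact hΔlt
          linarith
        · intro n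
          rw [hzs n]
          set bn := ‖z n - x0‖ with hbn
          have hbnvs : bn ≤ vs := hinv n
          have hbna : bn < a := lt_of_le_of_lt hbnvs hcase
          have hmemz : z n ∈ closedBall x0 R := mem_closedBall_iff_norm.2 (hbnvs.trans hvsR)
          have hseg := seg_aux D F F' hF Bc x0 R l0 α ν hl0 hα0 hball hbound p (z n)
            hpR hmemz hbna
          rw [hPP, hPp] at hseg
          refine hseg.trans ?_
          have hsec := (convexOn_rpow hα1.le).secant_mono (mem_Ici.2 (hvs0.trans hcase.le))
            (mem_Ici.2 (norm_nonneg _)) (mem_Ici.2 hvs0) (ne_of_lt hbna) (ne_of_lt hcase) hbnvs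
          have hsec' : (a^(α+1) - bn^(α+1))/(a - bn) ≤ (a^(α+1) - vs^(α+1))/(a - vs) := by
            have e1 : (a^(α+1) - bn^(α+1))/(a - bn) = (bn^(α+1) - a^(α+1))/(bn - a) := by
              rw [← neg_div_neg_eq]; ring_nf
            have e2 : (a^(α+1) - vs^(α+1))/(a - vs) = (vs^(α+1) - a^(α+1))/(vs - a) := by
              rw [← neg_div_neg_eq]; ring_nf
            rw [e1, e2]; exact hsec
          have hfac : ν + l0 * (a^(α+1) - bn^(α+1)) / ((α+1)*(a - bn)) ≤
              ν + l0 * (a^(α+1) - vs^(α+1)) / ((α+1)*(a - vs)) := by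
            have h1 : l0 * (a^(α+1) - bn^(α+1)) / ((α+1)*(a - bn)) =
                (l0/(α+1)) * ((a^(α+1) - bn^(α+1))/(a - bn)) := by
              field_simp
            have h2 : l0 * (a^(α+1) - vs^(α+1)) / ((α+1)*(a - vs)) =
                (l0/(α+1)) * ((a^(α+1) - vs^(α+1))/(a - vs)) := by
              field_simp
            rw [h1, h2]
            have := mul_le_mul_of_nonneg_left hsec' (by positivity : (0:ℝ) ≤ l0/(α+1))
            linarith
          exact mul_le_mul_of_nonneg_right hfac (norm_nonneg _)
    have hiter : ∀ n, ‖p - z n‖ ≤ q^n * ‖p - x0‖ := by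
      intro n
      induction n with
      | zero => simp [hz0]
      | succ n ih =>
        calc ‖p - z (n+1)‖ ≤ q * ‖p - z n‖ := hqstep n
          _ ≤ q * (q^n * ‖p - x0‖) := mul_le_mul_of_nonneg_left ih hq0
          _ = q^(n+1) * ‖p - x0‖ := by ring
    have hqt : Tendsto (fun n => q^n * ‖p - x0‖) atTop (𝓝 0) := by
      simpa using (tendsto_pow_atTop_nhds_zero_of_lt_one hq0 hq1').mul_const ‖p - x0‖
    rw [tendsto_iff_dist_tendsto_zero]
    refine tendsto_of_tendsto_of_tendsto_of_le_of_le tendsto_const_nhds hqt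
      (fun n => dist_nonneg) (fun n => ?_)
    rw [dist_eq_norm, ← norm_sub_rev]
    exact hiter n
  exact tendsto_nhds_unique (hconv x hx hFx) (hconv y hy hFy)
end
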